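/- arXiv:1703.03307 — 7 statements merged into one kernel-verified Lean document; each statement's English description precedes it below -/
import Mathlib

section
/- Let I be a finite index set and suppose the tensors (A,B,C), with A^i_{j,k} = A^i_{k,j} and C^i_{j,k} = C^i_{k,j}, satisfy the relations (SymA), (BB-AC), (BC) and (BA). Set f^k_{i,j} := B^i_{j,k} − B^j_{i,k} and D_ref^i := (1/2) Σ_a B^i_{a,a}. Then: (i) the family D_ref satisfies the (D) relation; (ii) an arbitrary family D = (D^i)_{i∈I} of complex scalars satisfies the (D) relation if and only if Σ_a f^a_{i,j} (D^a − D_ref^a) = 0 for all i, j ∈ I; in particular, if f^k_{i,j} = 0 for all i,j,k, then every family D satisfies the (D) relation. -/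
section Relations

variable {I : Type*} [Fintype I]

/-- The **BB-AC** relation. -/
def RelBBAC (A B C : I → I → I → ℂ) : Prop :=
  ∀ i j k l, ∑ a, (B i j a * B a k l + B i k a * B j a l + C i l a * A j a k)
    = ∑ a, (B j i a * B a k l + B j k a * B i a l + C j l a * A i a k)

/-- The **BC** relation. -/
def RelBC (B C : I → I → I → ℂ) : Prop :=
  ∀ i j k l, ∑ a, (B i j a * C a k l + C i k a * B j a l + C i l a * B j a k)
    = ∑ a, (B j i a * C a k l + C j k a * B i a l + C j l a * B i a k)

/-- The **BA** relation. -/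
def RelBA (A B : I → I → I → ℂ) : Prop :=
  ∀ i j k l, ∑ a, (B i j a * A a k l + B i k a * A j a l + B i l a * A j a k)
    = ∑ a, (B j i a * A a k l + B j k a * A i a l + B j l a * A i a k)

/-- The **D** relation. -/
def RelD (A B C : I → I → I → ℂ) (D : I → ℂ) : Prop :=
  ∀ i j, (∑ a, B i j a * D a) + (1 / 2) * ∑ a, ∑ b, C i a b * A j a b
    = (∑ a, B j i a * D a) + (1 / 2) * ∑ a, ∑ b, C j a b * A i a b

end Relations

/-- If `(A,B,C)` solves the (SymA), (BB-AC), (BC) and (BA) relations, then, with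
`f^k_{i,j} := B^i_{j,k} − B^j_{i,k}` and `D_ref^i := (1/2) Σ_a B^i_{a,a}`:
(i) `D_ref` satisfies the (D) relation;
(ii) a family `D` satisfies the (D) relation iff `Σ_a f^a_{i,j}(D^a − D_ref^a) = 0` for
all `i,j`; in particular (iii) if the structure constants `f` all vanish then every `D`
satisfies the (D) relation. -/
theorem stmt2 {I : Type*} [Fintype I]
    (A B C : I → I → I → ℂ)
    (hA : ∀ i j k, A i j k = A i k j) (hC : ∀ i j k, C i j k = C i k j)
    (hSymA : ∀ i j k, A i j k = A j i k)
    (h1 : RelBBAC A B C) (h2 : RelBC B C) (h3 : RelBA A B) :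
    RelD A B C (fun i => (1 / 2) * ∑ a, B i a a)
    ∧ (∀ D : I → ℂ, RelD A B C D ↔
        ∀ i j, ∑ a, (B i j a - B j i a) * (D a - (1 / 2) * ∑ b, B a b b) = 0)
    ∧ ((∀ i j k, B i j k - B j i k = 0) → ∀ D : I → ℂ, RelD A B C D) := by
  -- Key doubled identity from summing (BB-AC) over k = l = a.
  have key : ∀ i j, (∑ a, B i j a * ∑ b, B a b b) + ∑ a, ∑ b, C i a b * A j a b
      = (∑ a, B j i a * ∑ b, B a b b) + ∑ a, ∑ b, C j a b * A i a b := by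
    intro i j
    have H : ∑ a, ∑ c, (B i j c * B c a a + B i a c * B j c a + C i a c * A j c a)
        = ∑ a, ∑ c, (B j i c * B c a a + B j a c * B i c a + C j a c * A i c a) :=
      Finset.sum_congr rfl fun a _ => h1 i j a a
    have split : ∀ (i j : I),
        ∑ a, ∑ c, (B i j c * B c a a + B i a c * B j c a + C i a c * A j c a)
        = (∑ a, B i j a * ∑ b, B a b b) + (∑ a, ∑ c, B i a c * B j c a)
          + ∑ a, ∑ b, C i a b * A j a b := by
      intro i j
      simp only [Finset.sum_add_distrib]
      congr 1
      · congr 1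
        rw [Finset.sum_comm]
        exact Finset.sum_congr rfl fun a _ => (Finset.mul_sum _ _ _).symm
      · exact Finset.sum_congr rfl fun a _ => Finset.sum_congr rfl fun b _ => by rw [hA]
    have M : (∑ a, ∑ c, B i a c * B j c a) = ∑ a, ∑ c, B j a c * B i c a := by
      rw [Finset.sum_comm]
      exact Finset.sum_congr rfl fun a _ => Finset.sum_congr rfl fun c _ => mul_comm _ _
    rw [split, split, M] at H
    linear_combination H
  -- pull the scalar 1/2 out of the sums
  have pull : ∀ i j, ∑ a, B i j a * ((1 / 2 : ℂ) * ∑ b, B a b b)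
      = (1 / 2) * ∑ a, B i j a * ∑ b, B a b b := by
    intro i j
    rw [Finset.mul_sum]
    exact Finset.sum_congr rfl fun a _ => by ring
  -- Part (i)
  have h0 : RelD A B C (fun i => (1 / 2) * ∑ a, B i a a) := by
    intro i j
    simp only []
    rw [pull, pull]
    linear_combination (1 / 2 : ℂ) * key i j
  -- expansion lemma
  have expand : ∀ (D : I → ℂ) (i j : I),
      ∑ a, (B i j a - B j i a) * (D a - (1 / 2) * ∑ b, B a b b)
      = ((∑ a, B i j a * D a) - ∑ a, B i j a * ((1 / 2) * ∑ b, B a b b))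
        - ((∑ a, B j i a * D a) - ∑ a, B j i a * ((1 / 2) * ∑ b, B a b b)) := by
    intro D i j
    rw [← Finset.sum_sub_distrib, ← Finset.sum_sub_distrib, ← Finset.sum_sub_distrib]
    exact Finset.sum_congr rfl fun a _ => by ring
  have h0' := fun i j => h0 i j
  simp only [] at h0'
  refine ⟨h0, ?_, ?_⟩
  · intro D
    constructor
    · intro hD i j
      rw [expand]
      linear_combination hD i j - h0' i j
    · intro hf i j
      have := hf i j
      rw [expand] at this
      linear_combination h0' i j + this
  · intro hz D i j
    have hf : ∀ i j, ∑ a, (B i j a - B j i a) * (D a - (1 / 2) * ∑ b, B a b b) = 0 := by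
      intro i j
      simp [hz]
    have := hf i j
    rw [expand] at this
    linear_combination h0' i j + this
end

section
/- Let I be a finite index set and for each i ∈ I let A^i, B^i, C^i be I×I complex matrices, with A^i and C^i symmetric, and write (A^i)_{j,k} = A^i_{j,k}, etc. Define the block matrix ρ_i of size (I ⊕ I) × (I ⊕ I) with top-left block −B^i, top-right block A^i, bottom-left block −C^i, and bottom-right block (B^i)^T. Set f^k_{i,j} := B^i_{j,k} − B^j_{i,k}. Then [ρ_i, ρ_j] = Σ_a f^a_{i,j} ρ_a for all i, j ∈ I if and only if the relations (BB-AC), (BC) and (BA) hold. -/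
/-- The block matrix
`ρ_i = [[−B^i, A^i], [−C^i, (B^i)ᵀ]]` acting on `ℂ^I ⊕ ℂ^I`. -/
def rhoMat {I : Type*} [Fintype I] (A B C : I → I → I → ℂ) (i : I) :
    Matrix (I ⊕ I) (I ⊕ I) ℂ :=
  Matrix.fromBlocks
    (Matrix.of fun j k => -B i j k)
    (Matrix.of fun j k => A i j k)
    (Matrix.of fun j k => -C i j k)
    (Matrix.of fun j k => B i k j)

private lemma sum_helper {I : Type*} [Fintype I] (F G F' G' : I → ℂ)
    (e : ∀ a, F a - G a = F' a - G' a) (h : ∑ a, F' a = ∑ a, G' a) :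
    ∑ a, F a = ∑ a, G a := by
  have h2 : ∑ a, (F a - G a) = ∑ a, (F' a - G' a) :=
    Finset.sum_congr rfl fun a _ => e a
  rw [Finset.sum_sub_distrib, Finset.sum_sub_distrib] at h2
  linear_combination h2 + h

/-- With `f^k_{i,j} := B^i_{j,k} − B^j_{i,k}`, the block matrices `ρ_i` satisfy
`[ρ_i, ρ_j] = Σ_a f^a_{i,j} ρ_a` for all `i, j` if and only if the relations
(BB-AC), (BC) and (BA) hold. -/
theorem stmt3 {I : Type*} [Fintype I] [DecidableEq I]
    (A B C : I → I → I → ℂ)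
    (hA : ∀ i j k, A i j k = A i k j) (hC : ∀ i j k, C i j k = C i k j) :
    (∀ i j, rhoMat A B C i * rhoMat A B C j - rhoMat A B C j * rhoMat A B C i
        = ∑ a, (B i j a - B j i a) • rhoMat A B C a)
      ↔ (RelBBAC A B C ∧ RelBC B C ∧ RelBA A B) := by
  constructor
  · intro H
    refine ⟨fun i j k l => ?_, fun i j k l => ?_, fun i j k l => ?_⟩
    · -- BB-AC from the (inl,inl) block
      have h0 := congrFun (congrFun (H i j) (Sum.inl k)) (Sum.inl l)
      simp only [rhoMat, Matrix.sub_apply, Matrix.mul_apply, Matrix.fromBlocks_apply₁₁,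
        Matrix.fromBlocks_apply₁₂, Matrix.fromBlocks_apply₂₁, Matrix.fromBlocks_apply₂₂,
        Matrix.of_apply, Fintype.sum_sum_type, Matrix.sum_apply, Matrix.smul_apply,
        smul_eq_mul] at h0
      refine sum_helper _ _
        (fun a => -B i k a * -B j a l + A i k a * -C j a l - (B i j a - B j i a) * -B a k l)
        (fun a => -B j k a * -B i a l + A j k a * -C i a l)
        (fun a => ?_) ?_
      · rw [hA j a k, hA i a k, hC i l a, hC j l a]; ring
      · simp only [Finset.sum_add_distrib, Finset.sum_sub_distrib]
        linear_combination h0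
    · -- BC from the (inr,inl) block
      have h0 := congrFun (congrFun (H i j) (Sum.inr k)) (Sum.inl l)
      simp only [rhoMat, Matrix.sub_apply, Matrix.mul_apply, Matrix.fromBlocks_apply₁₁,
        Matrix.fromBlocks_apply₁₂, Matrix.fromBlocks_apply₂₁, Matrix.fromBlocks_apply₂₂,
        Matrix.of_apply, Fintype.sum_sum_type, Matrix.sum_apply, Matrix.smul_apply,
        smul_eq_mul] at h0
      refine sum_helper _ _
        (fun a => -C i k a * -B j a l + B i a k * -C j a l - (B i j a - B j i a) * -C a k l)
        (fun a => -C j k a * -B i a l + B j a k * -C i a l)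
        (fun a => ?_) ?_
      · rw [hC i l a, hC j l a]; ring
      · simp only [Finset.sum_add_distrib, Finset.sum_sub_distrib]
        linear_combination h0
    · -- BA from the (inl,inr) block
      have h0 := congrFun (congrFun (H i j) (Sum.inl k)) (Sum.inr l)
      simp only [rhoMat, Matrix.sub_apply, Matrix.mul_apply, Matrix.fromBlocks_apply₁₁,
        Matrix.fromBlocks_apply₁₂, Matrix.fromBlocks_apply₂₁, Matrix.fromBlocks_apply₂₂,
        Matrix.of_apply, Fintype.sum_sum_type, Matrix.sum_apply, Matrix.smul_apply,
        smul_eq_mul] at h0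
      refine sum_helper _ _
        (fun a => -B j k a * A i a l + A j k a * B i l a)
        (fun a => -B i k a * A j a l + A i k a * B j l a - (B i j a - B j i a) * A a k l)
        (fun a => ?_) ?_
      · rw [hA j a k, hA i a k]; ring
      · simp only [Finset.sum_add_distrib, Finset.sum_sub_distrib]
        linear_combination -h0
  · rintro ⟨hBBAC, hBC, hBA⟩ i j
    ext p q
    obtain p | p := p <;> obtain q | q := q <;>
      simp only [rhoMat, Matrix.sub_apply, Matrix.mul_apply, Matrix.fromBlocks_apply₁₁,
        Matrix.fromBlocks_apply₁₂, Matrix.fromBlocks_apply₂₁, Matrix.fromBlocks_apply₂₂,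
        Matrix.of_apply, Fintype.sum_sum_type, Matrix.sum_apply, Matrix.smul_apply,
        smul_eq_mul]
    · -- (inl, inl) from BB-AC
      have h' : ∑ a, (-B i p a * -B j a q + A i p a * -C j a q
            - (B i j a - B j i a) * -B a p q)
          = ∑ a, (-B j p a * -B i a q + A j p a * -C i a q) := by
        refine sum_helper _ _
          (fun a => B i j a * B a p q + B i p a * B j a q + C i q a * A j a p)
          (fun a => B j i a * B a p q + B j p a * B i a q + C j q a * A i a p)
          (fun a => ?_) (hBBAC i j p q)
        beta_reduce
        rw [hA j a p, hA i a p, hC i q a, hC j q a]; ring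
      simp only [Finset.sum_add_distrib, Finset.sum_sub_distrib] at h'
      linear_combination h'
    · -- (inl, inr) from BA
      have h' : ∑ a, (-B i p a * A j a q + A i p a * B j q a
            - (B i j a - B j i a) * A a p q)
          = ∑ a, (-B j p a * A i a q + A j p a * B i q a) := by
        refine sum_helper _ _
          (fun a => B j i a * A a p q + B j p a * A i a q + B j q a * A i a p)
          (fun a => B i j a * A a p q + B i p a * A j a q + B i q a * A j a p)
          (fun a => ?_) (hBA i j p q).symm
        beta_reduce
        rw [hA j a p, hA i a p]; ring
      simp only [Finset.sum_add_distrib, Finset.sum_sub_distrib] at h'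
      linear_combination h'
    · -- (inr, inl) from BC
      have h' : ∑ a, (-C i p a * -B j a q + B i a p * -C j a q
            - (B i j a - B j i a) * -C a p q)
          = ∑ a, (-C j p a * -B i a q + B j a p * -C i a q) := by
        refine sum_helper _ _
          (fun a => B i j a * C a p q + C i p a * B j a q + C i q a * B j a p)
          (fun a => B j i a * C a p q + C j p a * B i a q + C j q a * B i a p)
          (fun a => ?_) (hBC i j p q)
        beta_reduce
        rw [hC i q a, hC j q a]; ring
      simp only [Finset.sum_add_distrib, Finset.sum_sub_distrib] at h'
      linear_combination h'
    · -- (inr, inr) from BB-AC with swapped column indices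
      have h' : ∑ a, (-C i p a * A j a q + B i a p * B j q a
            - (B i j a - B j i a) * B a q p)
          = ∑ a, (-C j p a * A i a q + B j a p * B i q a) := by
        refine sum_helper _ _
          (fun a => B j i a * B a q p + B j q a * B i a p + C j p a * A i a q)
          (fun a => B i j a * B a q p + B i q a * B j a p + C i p a * A j a q)
          (fun a => ?_) (hBBAC i j q p).symm
        ring
      simp only [Finset.sum_add_distrib, Finset.sum_sub_distrib] at h'
      linear_combination h'
end

section
/- Let 𝔸 be a finite-dimensional commutative associative ℂ-algebra (not necessarily unital) and φ : 𝔸 → ℂ a linear form such that the bilinear form ⟨v, w⟩ := φ(vw) is nondegenerate. Let (e_i)_{i∈I} be a basis of 𝔸 and (e*_i)_{i∈I} the dual basis with respect to ⟨·,·⟩, i.e. φ(e_i e*_j) = δ_{i,j}. Fix θ_A, θ_B, θ_C ∈ 𝔸 and define A^i_{j,k} := φ(e*_i e*_j e*_k θ_A), B^i_{j,k} := φ(e*_i e*_j e_k θ_B), C^i_{j,k} := φ(e*_i e_j e_k θ_C). Then: A^i_{j,k} is fully symmetric under permutations of (i,j,k); C^i_{j,k} = C^i_{k,j}; B^i_{j,k}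 = B^j_{i,k} (so the structure constants f^k_{i,j} := B^i_{j,k} − B^j_{i,k} all vanish and the underlying Lie algebra is abelian); the relations (BB-AC), (BC), (BA) hold; and the (D) relation holds for every choice of scalars D^i. Hence (A,B,C,D) defines a quantum Airy structure for every D. -/
/-- Let `𝔸` be a (not necessarily unital) Frobenius algebra over `ℂ`, i.e. a
finite-dimensional commutative associative `ℂ`-algebra with a linear form `φ` whose
associated pairing `⟨v,w⟩ = φ(vw)` is nondegenerate.  Given a basis `(e_i)`, a dual
family `(e*_i)` with `φ(e_i e*_j) = δ_{ij}`, and elements `θ_A, θ_B, θ_C ∈ 𝔸`, the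
tensors `A^i_{jk} = φ(e*_i e*_j e*_k θ_A)`, `B^i_{jk} = φ(e*_i e*_j e_k θ_B)`,
`C^i_{jk} = φ(e*_i e_j e_k θ_C)` define a quantum Airy structure for every `D`:
`A` is fully symmetric, `C` is symmetric in its lower indices, `B^i_{jk} = B^j_{ik}`
(so the structure constants vanish and the Lie algebra is abelian), the relations
(BB-AC), (BC), (BA) hold, and the (D) relation holds for every choice of `D`. -/
theorem stmt11 {I : Type*} [Fintype I] [DecidableEq I]
    {𝔸 : Type*} [NonUnitalCommRing 𝔸] [Module ℂ 𝔸]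
    [SMulCommClass ℂ 𝔸 𝔸] [IsScalarTower ℂ 𝔸 𝔸] [FiniteDimensional ℂ 𝔸]
    (φ : 𝔸 →ₗ[ℂ] ℂ)
    (hnd : ∀ v : 𝔸, (∀ w : 𝔸, φ (v * w) = 0) → v = 0)
    (e : Module.Basis I ℂ 𝔸) (estar : I → 𝔸)
    (hdual : ∀ i j, φ (e i * estar j) = if i = j then 1 else 0)
    (θA θB θC : 𝔸) :
    (∀ i j k, φ (estar i * estar j * estar k * θA) = φ (estar i * estar k * estar j * θA))
    ∧ (∀ i j k, φ (estar i * estar j * estar k * θA) = φ (estar j * estar i * estar k * θA))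
    ∧ (∀ i j k, φ (estar i * e j * e k * θC) = φ (estar i * e k * e j * θC))
    ∧ (∀ i j k, φ (estar i * estar j * e k * θB) = φ (estar j * estar i * e k * θB))
    ∧ RelBBAC (fun i j k => φ (estar i * estar j * estar k * θA))
        (fun i j k => φ (estar i * estar j * e k * θB))
        (fun i j k => φ (estar i * e j * e k * θC))
    ∧ RelBC (fun i j k => φ (estar i * estar j * e k * θB))
        (fun i j k => φ (estar i * e j * e k * θC))
    ∧ RelBA (fun i j k => φ (estar i * estar j * estar k * θA))
        (fun i j k => φ (estar i * estar j * e k * θB))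
    ∧ (∀ D : I → ℂ,
        RelD (fun i j k => φ (estar i * estar j * estar k * θA))
          (fun i j k => φ (estar i * estar j * e k * θB))
          (fun i j k => φ (estar i * e j * e k * θC)) D) := by
  -- completeness of the basis `e` with dual family `estar`
  have hrepr : ∀ (y : 𝔸) (j : I), φ (y * estar j) = e.repr y j := by
    intro y j
    conv_lhs => rw [← e.sum_repr y]
    rw [Finset.sum_mul, map_sum]
    simp [smul_mul_assoc, hdual]
  have L2 : ∀ y : 𝔸, ∑ a, φ (y * e a) • estar a = y := by
    intro y
    have h0 : ∀ j, φ ((y - ∑ a, φ (y * e a) • estar a) * e j) = 0 := by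
      intro j
      rw [sub_mul, map_sub, Finset.sum_mul, map_sum]
      have : ∀ a, φ ((φ (y * e a) • estar a) * e j)
          = φ (y * e a) * (if j = a then 1 else 0) := by
        intro a
        rw [smul_mul_assoc, map_smul, smul_eq_mul, mul_comm (estar a) (e j), hdual]
      simp [this]
    have hz : (y - ∑ a, φ (y * e a) • estar a) = 0 := by
      apply hnd
      intro w
      conv_lhs => rw [← e.sum_repr w]
      rw [Finset.mul_sum, map_sum]
      refine Finset.sum_eq_zero fun a _ => ?_
      rw [mul_smul_comm, map_smul, smul_eq_mul, h0, mul_zero]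
    exact (sub_eq_zero.mp hz).symm
  have key : ∀ x y : 𝔸, ∑ a, φ (x * estar a) * φ (y * e a) = φ (x * y) := by
    intro x y
    have hxy : x * y = ∑ a, φ (y * e a) • (x * estar a) := by
      conv_lhs => rw [← L2 y]
      rw [Finset.mul_sum]
      exact Finset.sum_congr rfl fun a _ => (mul_smul_comm _ _ _)
    rw [hxy, map_sum]
    exact Finset.sum_congr rfl fun a _ => by rw [map_smul, smul_eq_mul, mul_comm]
  have T1 : ∀ p q r s, ∑ a, φ (estar p * estar q * e a * θB) * φ (estar a * estar r * e s * θB)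
      = φ ((estar r * e s * θB) * (estar p * estar q * θB)) := by
    intro p q r s
    rw [← key]
    exact Finset.sum_congr rfl fun a _ => by
      simp only [mul_comm, mul_left_comm, mul_assoc]
  have T2 : ∀ p q r s, ∑ a, φ (estar p * estar r * e a * θB) * φ (estar q * estar a * e s * θB)
      = φ ((estar q * e s * θB) * (estar p * estar r * θB)) := by
    intro p q r s
    rw [← key]
    exact Finset.sum_congr rfl fun a _ => by
      simp only [mul_comm, mul_left_comm, mul_assoc]
  have T3 : ∀ p q r s, ∑ a, φ (estar p * e s * e a * θC) * φ (estar q * estar a * estar r * θA)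
      = φ ((estar q * estar r * θA) * (estar p * e s * θC)) := by
    intro p q r s
    rw [← key]
    exact Finset.sum_congr rfl fun a _ => by
      simp only [mul_comm, mul_left_comm, mul_assoc]
  have U1 : ∀ p q r s, ∑ a, φ (estar p * estar q * e a * θB) * φ (estar a * e r * e s * θC)
      = φ ((e r * e s * θC) * (estar p * estar q * θB)) := by
    intro p q r s
    rw [← key]
    exact Finset.sum_congr rfl fun a _ => by
      simp only [mul_comm, mul_left_comm, mul_assoc]
  have U2 : ∀ p q r s, ∑ a, φ (estar p * e r * e a * θC) * φ (estar q * estar a * e s * θB)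
      = φ ((estar q * e s * θB) * (estar p * e r * θC)) := by
    intro p q r s
    rw [← key]
    exact Finset.sum_congr rfl fun a _ => by
      simp only [mul_comm, mul_left_comm, mul_assoc]
  have V1 : ∀ p q r s, ∑ a, φ (estar p * estar q * e a * θB) * φ (estar a * estar r * estar s * θA)
      = φ ((estar r * estar s * θA) * (estar p * estar q * θB)) := by
    intro p q r s
    rw [← key]
    exact Finset.sum_congr rfl fun a _ => by
      simp only [mul_comm, mul_left_comm, mul_assoc]
  have V2 : ∀ p q r s, ∑ a, φ (estar p * estar r * e a * θB) * φ (estar q * estar a * estar s * θA)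
      = φ ((estar q * estar s * θA) * (estar p * estar r * θB)) := by
    intro p q r s
    rw [← key]
    exact Finset.sum_congr rfl fun a _ => by
      simp only [mul_comm, mul_left_comm, mul_assoc]
  have W : ∀ p q a, ∑ b, φ (estar p * e a * e b * θC) * φ (estar q * estar a * estar b * θA)
      = φ ((estar q * estar a * θA) * (estar p * e a * θC)) := by
    intro p q a
    rw [← key]
    exact Finset.sum_congr rfl fun b _ => by
      simp only [mul_comm, mul_left_comm, mul_assoc]
  refine ⟨fun i j k => by simp only [mul_comm, mul_left_comm, mul_assoc],
    fun i j k => by simp only [mul_comm, mul_left_comm, mul_assoc],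
    fun i j k => by simp only [mul_comm, mul_left_comm, mul_assoc],
    fun i j k => by simp only [mul_comm, mul_left_comm, mul_assoc],
    ?_, ?_, ?_, ?_⟩
  · intro i j k l
    dsimp only
    simp only [Finset.sum_add_distrib, T1, T2, T3]
    simp only [mul_comm, mul_left_comm, mul_assoc]
  · intro i j k l
    dsimp only
    simp only [Finset.sum_add_distrib, U1, U2]
    simp only [mul_comm, mul_left_comm, mul_assoc]
  · intro i j k l
    dsimp only
    simp only [Finset.sum_add_distrib, V1, V2]
    simp only [mul_comm, mul_left_comm, mul_assoc]
  · intro D i j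
    dsimp only
    congr 1
    · exact Finset.sum_congr rfl fun a _ => by
        rw [mul_comm (estar i) (estar j)]
    · simp only [W]
      congr 1
      exact Finset.sum_congr rfl fun a _ => by
        simp only [mul_comm, mul_left_comm, mul_assoc]
end

section
/- Let 𝔸 be a finite-dimensional associative ℂ-algebra (not necessarily commutative) and φ : 𝔸 → ℂ a linear form with φ(vw) = φ(wv) for all v, w ∈ 𝔸 and such that ⟨v, w⟩ := φ(vw) is nondegenerate, and let (e_i)_{i∈I} be an orthonormal basis: φ(e_i e_j) = δ_{i,j}. Let λ_A, λ_B, λ_C be central elements of 𝔸 with λ_B² + λ_A λ_C = 0. Writing [v,w] := vw − wv and {v,w} := vw + wv, define A^i_{j,k} := φ(λ_A {e_j, e_k} e_i), B^i_{j,k} := φ(λ_B [e_i, e_j] e_k), C^i_{j,k} := φ(λ_C {e_i, e_j} e_k). Then: A^i_{j,k} is fully symmetric under permutations of (i,j,k), C^i_{j,k} = C^i_{k,j}, and the relations (BB-AC), (BC), (BA) hold; moreover a family D = (D^a)_{a∈I} of complex scalars satisfies the (D) relation if and only if φ(λ_B (Σ_a D^a e_a) [v, w]) = 0 for all v, w ∈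 𝔸, i.e. λ_B·(Σ_a D^a e_a) lies in the orthogonal complement of the span of all commutators [𝔸, 𝔸]. -/
section TrId
variable {𝔸 : Type*} [NonUnitalRing 𝔸] [Module ℂ 𝔸]

lemma rot4 (φ : 𝔸 →ₗ[ℂ] ℂ) (L : 𝔸) (hcyc : ∀ u v : 𝔸, φ (L * (u * v)) = φ (L * (v * u)))
    (a b c d : 𝔸) : φ (L * (a * (b * (c * d)))) = φ (L * (b * (c * (d * a)))) := by
  simpa [mul_assoc] using hcyc a (b * (c * d))

lemma rot4' (φ : 𝔸 →ₗ[ℂ] ℂ) (L : 𝔸) (hcyc : ∀ u v : 𝔸, φ (L * (u * v)) = φ (L * (v * u)))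
    (a b c d : 𝔸) : φ (L * (a * (b * (c * d)))) = φ (L * (d * (a * (b * c)))) :=
  (rot4 φ L hcyc d a b c).symm

lemma trIdBBAC (φ : 𝔸 →ₗ[ℂ] ℂ) (L : 𝔸) (hcyc : ∀ u v : 𝔸, φ (L * (u * v)) = φ (L * (v * u)))
    (x y z w : 𝔸) :
    φ (L * ((x*y - y*x) * (z*w - w*z))) + φ (L * ((x*z - z*x) * (w*y - y*w)))
      - φ (L * ((x*w + w*x) * (z*y + y*z)))
    = φ (L * ((y*x - x*y) * (z*w - w*z))) + φ (L * ((y*z - z*y) * (w*x - x*w)))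
      - φ (L * ((y*w + w*y) * (z*x + x*z))) := by
  simp only [mul_sub, sub_mul, mul_add, add_mul, map_sub, map_add, mul_assoc]
  rw [rot4' φ L hcyc y z w x, rot4' φ L hcyc z y w x, rot4' φ L hcyc y w z x,
    rot4 φ L hcyc w y z x, rot4 φ L hcyc y z x w, rot4 φ L hcyc w y x z,
    rot4 φ L hcyc z y x w, rot4 φ L hcyc y w x z, rot4 φ L hcyc y x z w,
    rot4 φ L hcyc y x w z, rot4 φ L hcyc z x w y, rot4 φ L hcyc z x y w,
    rot4 φ L hcyc w x y z, rot4 φ L hcyc w x z y]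
  ring

lemma trIdBC (φ : 𝔸 →ₗ[ℂ] ℂ) (L : 𝔸) (hcyc : ∀ u v : 𝔸, φ (L * (u * v)) = φ (L * (v * u)))
    (x y z w : 𝔸) :
    φ (L * ((x*y - y*x) * (z*w + w*z))) + φ (L * ((x*z + z*x) * (w*y - y*w)))
      + φ (L * ((x*w + w*x) * (z*y - y*z)))
    = φ (L * ((y*x - x*y) * (z*w + w*z))) + φ (L * ((y*z + z*y) * (w*x - x*w)))
      + φ (L * ((y*w + w*y) * (z*x - x*z))) := by
  simp only [mul_sub, sub_mul, mul_add, add_mul, map_sub, map_add, mul_assoc]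
  rw [rot4' φ L hcyc y z w x, rot4' φ L hcyc z y w x, rot4' φ L hcyc y w z x,
    rot4 φ L hcyc w y z x, rot4 φ L hcyc y z x w, rot4 φ L hcyc w y x z,
    rot4 φ L hcyc z y x w, rot4 φ L hcyc y w x z, rot4 φ L hcyc y x z w,
    rot4 φ L hcyc y x w z, rot4 φ L hcyc z x w y, rot4 φ L hcyc z x y w,
    rot4 φ L hcyc w x y z, rot4 φ L hcyc w x z y]
  ring

lemma trIdBA (φ : 𝔸 →ₗ[ℂ] ℂ) (L : 𝔸) (hcyc : ∀ u v : 𝔸, φ (L * (u * v)) = φ (L * (v * u)))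
    (x y z w : 𝔸) :
    φ (L * ((x*y - y*x) * (z*w + w*z))) + φ (L * ((x*z - z*x) * (w*y + y*w)))
      + φ (L * ((x*w - w*x) * (z*y + y*z)))
    = φ (L * ((y*x - x*y) * (z*w + w*z))) + φ (L * ((y*z - z*y) * (w*x + x*w)))
      + φ (L * ((y*w - w*y) * (z*x + x*z))) := by
  simp only [mul_sub, sub_mul, mul_add, add_mul, map_sub, map_add, mul_assoc]
  rw [rot4' φ L hcyc y z w x, rot4' φ L hcyc z y w x, rot4' φ L hcyc y w z x,
    rot4 φ L hcyc w y z x, rot4 φ L hcyc y z x w, rot4 φ L hcyc w y x z,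
    rot4 φ L hcyc z y x w, rot4 φ L hcyc y w x z, rot4 φ L hcyc y x z w,
    rot4 φ L hcyc y x w z, rot4 φ L hcyc z x w y, rot4 φ L hcyc z x y w,
    rot4 φ L hcyc w x y z, rot4 φ L hcyc w x z y]
  ring

end TrId

/-- Let `𝔸` be a non-commutative Frobenius algebra over `ℂ`: a finite-dimensional
associative `ℂ`-algebra with a trace form `φ` (`φ(vw) = φ(wv)`) whose pairing is
nondegenerate, and let `(e_i)` be an orthonormal basis.  For central elements
`λ_A, λ_B, λ_C` with `λ_B² + λ_A λ_C = 0`, the tensors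
`A^i_{jk} = φ(λ_A {e_j,e_k} e_i)`, `B^i_{jk} = φ(λ_B [e_i,e_j] e_k)`,
`C^i_{jk} = φ(λ_C {e_i,e_j} e_k)` satisfy: `A` fully symmetric, `C` symmetric in its
lower indices, the relations (BB-AC), (BC), (BA); and `D` satisfies the (D) relation iff
`φ(λ_B (Σ_a D^a e_a) [v,w]) = 0` for all `v, w ∈ 𝔸`. -/
theorem stmt12 {I : Type*} [Fintype I] [DecidableEq I]
    {𝔸 : Type*} [NonUnitalRing 𝔸] [Module ℂ 𝔸]
    [SMulCommClass ℂ 𝔸 𝔸] [IsScalarTower ℂ 𝔸 𝔸] [FiniteDimensional ℂ 𝔸]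
    (φ : 𝔸 →ₗ[ℂ] ℂ)
    (htr : ∀ v w : 𝔸, φ (v * w) = φ (w * v))
    (hnd : ∀ v : 𝔸, (∀ w : 𝔸, φ (v * w) = 0) → v = 0)
    (e : Module.Basis I ℂ 𝔸)
    (horth : ∀ i j, φ (e i * e j) = if i = j then 1 else 0)
    (lA lB lC : 𝔸)
    (hcA : ∀ v : 𝔸, lA * v = v * lA) (hcB : ∀ v : 𝔸, lB * v = v * lB)
    (hcC : ∀ v : 𝔸, lC * v = v * lC)
    (hrel : lB * lB + lA * lC = 0) :
    (∀ i j k, φ (lA * (e j * e k + e k * e j) * e i) = φ (lA * (e k * e j + e j * e k) * e i))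
    ∧ (∀ i j k, φ (lA * (e j * e k + e k * e j) * e i) = φ (lA * (e i * e k + e k * e i) * e j))
    ∧ (∀ i j k, φ (lC * (e i * e j + e j * e i) * e k) = φ (lC * (e i * e k + e k * e i) * e j))
    ∧ RelBBAC (fun i j k => φ (lA * (e j * e k + e k * e j) * e i))
        (fun i j k => φ (lB * (e i * e j - e j * e i) * e k))
        (fun i j k => φ (lC * (e i * e j + e j * e i) * e k))
    ∧ RelBC (fun i j k => φ (lB * (e i * e j - e j * e i) * e k))
        (fun i j k => φ (lC * (e i * e j + e j * e i) * e k))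
    ∧ RelBA (fun i j k => φ (lA * (e j * e k + e k * e j) * e i))
        (fun i j k => φ (lB * (e i * e j - e j * e i) * e k))
    ∧ (∀ D : I → ℂ,
        RelD (fun i j k => φ (lA * (e j * e k + e k * e j) * e i))
          (fun i j k => φ (lB * (e i * e j - e j * e i) * e k))
          (fun i j k => φ (lC * (e i * e j + e j * e i) * e k)) D
        ↔ ∀ v w : 𝔸, φ (lB * (∑ a, D a • e a) * (v * w - w * v)) = 0) := by

  -- basic manipulation tools
  have pull : ∀ (c : 𝔸), (∀ v, c * v = v * c) → ∀ X Y : 𝔸, X * (c * Y) = c * (X * Y) := by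
    intro c hc X Y; rw [← mul_assoc, ← hc, mul_assoc]
  have pull2 : ∀ (c₁ c₂ : 𝔸), (∀ v, c₂ * v = v * c₂) →
      ∀ X Y : 𝔸, (c₁ * X) * (c₂ * Y) = (c₁ * c₂) * (X * Y) := by
    intro c₁ c₂ h2 X Y; rw [mul_assoc, pull c₂ h2 X Y, ← mul_assoc]
  have hcMul : ∀ (c₁ c₂ : 𝔸), (∀ v, c₁ * v = v * c₁) → (∀ v, c₂ * v = v * c₂) →
      ∀ v : 𝔸, (c₁ * c₂) * v = v * (c₁ * c₂) := by
    intro c₁ c₂ h1 h2 v; rw [mul_assoc, h2, ← mul_assoc, h1, mul_assoc]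
  have cyc : ∀ (c : 𝔸), (∀ v, c * v = v * c) → ∀ u v : 𝔸, φ (c * (u * v)) = φ (c * (v * u)) := by
    intro c hc u v
    rw [← mul_assoc, htr, ← mul_assoc, ← hc, mul_assoc]
  have rot3 : ∀ (c : 𝔸), (∀ v, c * v = v * c) → ∀ a b d : 𝔸,
      φ (c * (a * (b * d))) = φ (c * (b * (d * a))) := by
    intro c hc a b d; simpa [mul_assoc] using cyc c hc a (b * d)
  have hrep : ∀ (v : 𝔸) (a : I), φ (e a * v) = e.repr v a := by
    intro v a
    conv_lhs => rw [← e.sum_repr v]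
    rw [Finset.mul_sum, map_sum]
    simp [horth, mul_smul_comm, Finset.sum_ite_eq]
  have key : ∀ u w : 𝔸, (∑ a, φ (u * e a) * φ (e a * w)) = φ (u * w) := by
    intro u w
    conv_rhs => rw [← e.sum_repr u]
    rw [Finset.sum_mul, map_sum]
    refine Finset.sum_congr rfl fun a _ => ?_
    rw [htr u (e a), hrep u a, smul_mul_assoc, map_smul, smul_eq_mul]
  -- summed "completeness" lemmas
  have keyA : ∀ u X : 𝔸, (∑ a, φ (u * e a) * φ (X * e a)) = φ (u * X) := by
    intro u X
    rw [← key u X]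
    exact Finset.sum_congr rfl fun a _ => by rw [htr X (e a)]
  have keyB1 : ∀ u z w : 𝔸,
      (∑ a, φ (u * e a) * φ (lB * (e a * z - z * e a) * w)) = φ (u * (lB * (z * w - w * z))) := by
    intro u z w
    rw [← key u (lB * (z * w - w * z))]
    refine Finset.sum_congr rfl fun a _ => ?_
    congr 1
    simp only [mul_sub, sub_mul, mul_assoc, map_sub, pull lB hcB]
    rw [rot3 lB hcB z (e a) w]
  have keyB2 : ∀ u z w : 𝔸,
      (∑ a, φ (u * e a) * φ (lB * (z * e a - e a * z) * w)) = φ (u * (lB * (w * z - z * w))) := by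
    intro u z w
    rw [← key u (lB * (w * z - z * w))]
    refine Finset.sum_congr rfl fun a _ => ?_
    congr 1
    simp only [mul_sub, sub_mul, mul_assoc, map_sub, pull lB hcB]
    rw [rot3 lB hcB z (e a) w]
  have keyS : ∀ (c : 𝔸), (∀ v, c * v = v * c) → ∀ u z w : 𝔸,
      (∑ a, φ (u * e a) * φ (c * (e a * z + z * e a) * w)) = φ (u * (c * (z * w + w * z))) := by
    intro c hc u z w
    rw [← key u (c * (z * w + w * z))]
    refine Finset.sum_congr rfl fun a _ => ?_
    congr 1
    simp only [mul_add, add_mul, mul_assoc, map_add, pull c hc]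
    rw [rot3 c hc z (e a) w]
  have keyS2 : ∀ (c : 𝔸), (∀ v, c * v = v * c) → ∀ u z w : 𝔸,
      (∑ a, φ (u * e a) * φ (c * (z * e a + e a * z) * w)) = φ (u * (c * (w * z + z * w))) := by
    intro c hc u z w
    rw [← key u (c * (w * z + z * w))]
    refine Finset.sum_congr rfl fun a _ => ?_
    congr 1
    simp only [mul_add, add_mul, mul_assoc, map_add, pull c hc]
    rw [rot3 c hc z (e a) w, add_comm]
  have hAC : lC * lA = -(lB * lB) := by
    rw [← hcA lC]
    rw [add_comm] at hrel
    exact eq_neg_of_add_eq_zero_left hrel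
  refine ⟨?_, ?_, ?_, ?_, ?_, ?_, ?_⟩
  · intro i j k; rw [add_comm (e j * e k)]
  · -- A symmetric under i ↔ j
    intro i j k
    simp only [mul_add, add_mul, mul_assoc, map_add]
    rw [rot3 lA hcA (e j) (e k) (e i), rot3 lA hcA (e k) (e j) (e i),
      rot3 lA hcA (e j) (e i) (e k)]
    ring
  · -- C symmetric in lower indices
    intro i j k
    simp only [mul_add, add_mul, mul_assoc, map_add]
    rw [rot3 lC hcC (e i) (e j) (e k), rot3 lC hcC (e j) (e k) (e i),
      rot3 lC hcC (e j) (e i) (e k)]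
    ring
  · -- BB-AC
    intro i j k l
    simp only [Finset.sum_add_distrib]
    rw [keyB1 (lB * (e i * e j - e j * e i)) (e k) (e l),
      keyB1 (lB * (e j * e i - e i * e j)) (e k) (e l),
      keyB2 (lB * (e i * e k - e k * e i)) (e j) (e l),
      keyB2 (lB * (e j * e k - e k * e j)) (e i) (e l),
      keyS lA hcA (lC * (e i * e l + e l * e i)) (e k) (e j),
      keyS lA hcA (lC * (e j * e l + e l * e j)) (e k) (e i)]
    simp only [pull2 lB lB hcB, pull2 lC lA hcA, hAC, neg_mul, map_neg]
    have := trIdBBAC φ (lB * lB) (cyc (lB * lB) (hcMul lB lB hcB hcB)) (e i) (e j) (e k) (e l)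
    linear_combination this
  · -- BC
    intro i j k l
    simp only [Finset.sum_add_distrib]
    rw [keyS lC hcC (lB * (e i * e j - e j * e i)) (e k) (e l),
      keyS lC hcC (lB * (e j * e i - e i * e j)) (e k) (e l),
      keyB2 (lC * (e i * e k + e k * e i)) (e j) (e l),
      keyB2 (lC * (e j * e k + e k * e j)) (e i) (e l),
      keyB2 (lC * (e i * e l + e l * e i)) (e j) (e k),
      keyB2 (lC * (e j * e l + e l * e j)) (e i) (e k)]
    simp only [pull2 lB lC hcC, pull2 lC lB hcB, hcC lB]
    have := trIdBC φ (lB * lC) (cyc (lB * lC) (hcMul lB lC hcB hcC)) (e i) (e j) (e k) (e l)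
    linear_combination this
  · -- BA
    intro i j k l
    simp only [Finset.sum_add_distrib]
    rw [keyA (lB * (e i * e j - e j * e i)) (lA * (e k * e l + e l * e k)),
      keyA (lB * (e j * e i - e i * e j)) (lA * (e k * e l + e l * e k)),
      keyS lA hcA (lB * (e i * e k - e k * e i)) (e l) (e j),
      keyS lA hcA (lB * (e j * e k - e k * e j)) (e l) (e i),
      keyS lA hcA (lB * (e i * e l - e l * e i)) (e k) (e j),
      keyS lA hcA (lB * (e j * e l - e l * e j)) (e k) (e i)]
    simp only [pull2 lB lA hcA]
    have := trIdBA φ (lB * lA) (cyc (lB * lA) (hcMul lB lA hcB hcA)) (e i) (e j) (e k) (e l)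
    linear_combination this
  · -- the D relation
    intro D
    unfold RelD
    set d : 𝔸 := ∑ a, D a • e a with hd
    have hBd : ∀ u : 𝔸, (∑ a, φ (u * e a) * D a) = φ (u * d) := by
      intro u
      rw [hd, Finset.mul_sum, map_sum]
      refine Finset.sum_congr rfl fun a _ => ?_
      rw [mul_smul_comm, map_smul, smul_eq_mul, mul_comm]
    have hCA : ∀ i j, (∑ a, ∑ b, φ (lC * (e i * e a + e a * e i) * e b)
          * φ (lA * (e a * e b + e b * e a) * e j))
        = ∑ a, φ ((lC * lA) * ((e i * e a + e a * e i) * ((e j * e a + e a * e j)))) := by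
      intro i j
      refine Finset.sum_congr rfl fun a _ => ?_
      rw [keyS2 lA hcA (lC * (e i * e a + e a * e i)) (e a) (e j), pull2 lC lA hcA]
    have hCAsym : ∀ i j,
        (∑ a, φ ((lC * lA) * ((e i * e a + e a * e i) * ((e j * e a + e a * e j)))))
        = ∑ a, φ ((lC * lA) * ((e j * e a + e a * e j) * ((e i * e a + e a * e i)))) := by
      intro i j
      exact Finset.sum_congr rfl fun a _ =>
        cyc (lC * lA) (hcMul lC lA hcC hcA) _ _
    have hmove : ∀ X : 𝔸, φ ((lB * X) * d) = φ (lB * d * X) := by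
      intro X
      rw [mul_assoc, cyc lB hcB X d, ← mul_assoc]
    have hflip : ∀ i j, φ (lB * (e j * e i - e i * e j) * d)
        = - φ (lB * (e i * e j - e j * e i) * d) := by
      intro i j
      rw [show e j * e i - e i * e j = -(e i * e j - e j * e i) from (neg_sub _ _).symm,
        mul_neg, neg_mul, map_neg]
    constructor
    · intro h v w
      have hbasis : ∀ i j, φ (lB * d * (e i * e j - e j * e i)) = 0 := by
        intro i j
        have h1 := h i j
        rw [hBd (lB * (e i * e j - e j * e i)), hBd (lB * (e j * e i - e i * e j)),
          hCA i j, hCA j i, hCAsym i j, hflip i j] at h1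
        have h2 : φ (lB * (e i * e j - e j * e i) * d) = 0 := by linear_combination h1 / 2
        rw [← hmove]; exact h2
      -- extend bilinearly
      let T : 𝔸 →ₗ[ℂ] 𝔸 →ₗ[ℂ] ℂ := LinearMap.mk₂ ℂ
        (fun v w => φ (lB * d * (v * w - w * v)))
        (by intro v₁ v₂ w; simp only [add_mul, mul_add, mul_sub, map_sub, map_add]; ring)
        (by intro c v w
            simp only [smul_mul_assoc, mul_smul_comm, ← smul_sub, map_smul, smul_eq_mul])
        (by intro v w₁ w₂; simp only [add_mul, mul_add, mul_sub, map_sub, map_add]; ring)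
        (by intro c v w
            simp only [smul_mul_assoc, mul_smul_comm, ← smul_sub, map_smul, smul_eq_mul])
      have hT : ∀ v w, T v w = φ (lB * d * (v * w - w * v)) := fun v w => rfl
      have : T v w = 0 := by
        rw [← e.sum_repr v, ← e.sum_repr w]
        simp only [map_sum, map_smul, LinearMap.sum_apply, LinearMap.smul_apply, smul_eq_mul,
          hT, hbasis, mul_zero, zero_mul, Finset.sum_const_zero]
      rw [← hT, this]
    · intro h i j
      have hb : φ (lB * (e i * e j - e j * e i) * d) = 0 := by
        rw [hmove]; exact h (e i) (e j)
      rw [hBd (lB * (e i * e j - e j * e i)), hBd (lB * (e j * e i - e i * e j)),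
        hCA i j, hCA j i, hCAsym i j, hflip i j, hb]
      ring
end

section
/- Fix an integer r ∈ ℤ and define tensors indexed by natural numbers i, j, k ∈ ℕ: A^i_{j,k} := 1/(i+1) if i+j+k+r+2 = 0 and 0 otherwise; B^i_{j,k} := (k+1)/(i+1) if k = i+j+r and 0 otherwise; C^i_{j,k} := (j+1)(k+1)/(i+1) if i+r = j+k+2 and 0 otherwise. (All sums over a ∈ ℕ occurring in the relations have at most one nonzero term.) Then: (a) the (BC) relation holds for every r ∈ ℤ; (b) the (BB-AC) relation holds for all i, j, k, l ∈ ℕ if and only if r ≥ −1; (c) the (BA) relation holds for all i, j, k, l ∈ ℕ if and only if r ≥ −1. -/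
/-- `A^i_{jk} = 1/(i+1)` if `i+j+k+r+2 = 0`, else `0`. -/
noncomputable def A13 (r : ℤ) (i j k : ℕ) : ℂ :=
  if (i : ℤ) + j + k + r + 2 = 0 then 1 / ((i : ℂ) + 1) else 0

/-- `B^i_{jk} = (k+1)/(i+1)` if `k = i+j+r`, else `0`. -/
noncomputable def B13 (r : ℤ) (i j k : ℕ) : ℂ :=
  if (k : ℤ) = i + j + r then ((k : ℂ) + 1) / ((i : ℂ) + 1) else 0

/-- `C^i_{jk} = (j+1)(k+1)/(i+1)` if `i+r = j+k+2`, else `0`. -/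
noncomputable def C13 (r : ℤ) (i j k : ℕ) : ℂ :=
  if (i : ℤ) + r = j + k + 2 then ((j : ℂ) + 1) * ((k : ℂ) + 1) / ((i : ℂ) + 1) else 0

lemma finsum_pt (f : ℕ → ℂ) (n : ℤ) (h : ∀ a : ℕ, (a:ℤ) ≠ n → f a = 0) :
    ∑ᶠ a : ℕ, f a = f n.toNat := by
  apply finsum_eq_single
  intro x hx
  apply h x
  intro hc
  exact hx (by omega)

lemma finsum_three (f g h : ℕ → ℂ) (nf ng nh : ℤ)
    (hf : ∀ a : ℕ, (a:ℤ) ≠ nf → f a = 0) (hg : ∀ a : ℕ, (a:ℤ) ≠ ng → g a = 0)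
    (hh : ∀ a : ℕ, (a:ℤ) ≠ nh → h a = 0) :
    ∑ᶠ a : ℕ, (f a + g a + h a) = f nf.toNat + g ng.toNat + h nh.toNat := by
  have Hf : (Function.support f).Finite := by
    apply Set.Finite.subset (Set.finite_singleton nf.toNat)
    intro a ha
    simp only [Function.mem_support] at ha
    simp only [Set.mem_singleton_iff]
    by_contra hne
    exact ha (hf a (by omega))
  have Hg : (Function.support g).Finite := by
    apply Set.Finite.subset (Set.finite_singleton ng.toNat)
    intro a ha
    simp only [Function.mem_support] at ha
    simp only [Set.mem_singleton_iff]
    by_contra hne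
    exact ha (hg a (by omega))
  have Hh : (Function.support h).Finite := by
    apply Set.Finite.subset (Set.finite_singleton nh.toNat)
    intro a ha
    simp only [Function.mem_support] at ha
    simp only [Set.mem_singleton_iff]
    by_contra hne
    exact ha (hh a (by omega))
  have Hfg : (Function.support (fun a => f a + g a)).Finite :=
    (Hf.union Hg).subset (Function.support_add _ _)
  rw [finsum_add_distrib Hfg Hh, finsum_add_distrib Hf Hg,
    finsum_pt f nf hf, finsum_pt g ng hg, finsum_pt h nh hh]

set_option maxHeartbeats 1000000

lemma termBC1 (r : ℤ) (i j k l : ℕ) :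
    B13 r i j ((i:ℤ)+j+r).toNat * C13 r ((i:ℤ)+j+r).toNat k l
    = (if 0 ≤ (i:ℤ)+j+r ∧ (i:ℤ)+j+2*r = (k:ℤ)+l+2 then
        ((k:ℂ)+1)*((l:ℂ)+1)*(((j:ℂ)+1)*2) else 0) / (((i:ℂ)+1)*((j:ℂ)+1)*2) := by
  simp only [B13, C13]
  have hz : ((((i:ℤ)+j+r).toNat : ℂ) + 1) ≠ 0 := Nat.cast_add_one_ne_zero _
  have hi : ((i:ℂ)+1) ≠ 0 := Nat.cast_add_one_ne_zero _
  have hj : ((j:ℂ)+1) ≠ 0 := Nat.cast_add_one_ne_zero _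
  split_ifs <;>
    first
      | (exfalso; omega)
      | (simp; done)
      | (rw [div_mul_div_comm, div_eq_div_iff (mul_ne_zero hi hz)
          (mul_ne_zero (mul_ne_zero hi hj) two_ne_zero)]; ring)

lemma termBC2 (r : ℤ) (i j k l : ℕ) :
    C13 r i k ((i:ℤ)+r-k-2).toNat * B13 r j ((i:ℤ)+r-k-2).toNat l
    = (if 0 ≤ (i:ℤ)+r-k-2 ∧ (i:ℤ)+j+2*r = (k:ℤ)+l+2 then
        ((k:ℂ)+1)*((l:ℂ)+1)*((i:ℂ)+(l:ℂ)-(j:ℂ)-(k:ℂ)) else 0)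
      / (((i:ℂ)+1)*((j:ℂ)+1)*2) := by
  simp only [B13, C13]
  have hi : ((i:ℂ)+1) ≠ 0 := Nat.cast_add_one_ne_zero _
  have hj : ((j:ℂ)+1) ≠ 0 := Nat.cast_add_one_ne_zero _
  split_ifs <;>
    first
      | (exfalso; omega)
      | (simp; done)
      | (have hn : 2 * ((i:ℤ)+r-k-2).toNat + 2 + j + k = i + l := by omega
         have hc : ((2 * ((i:ℤ)+r-k-2).toNat + 2 + j + k : ℕ) : ℂ) = ((i + l : ℕ) : ℂ) := by
           rw [hn]
         push_cast at hc
         have hv : ((((i:ℤ)+r-k-2).toNat : ℂ)) = ((i:ℂ)+(l:ℂ)-(j:ℂ)-(k:ℂ))/2 - 1 := by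
           linear_combination hc/2
         rw [hv, div_mul_div_comm, div_eq_div_iff (mul_ne_zero hi hj)
           (mul_ne_zero (mul_ne_zero hi hj) two_ne_zero)]
         ring)

lemma sumBC (r : ℤ) (i j k l : ℕ) :
    ∑ᶠ a : ℕ, (B13 r i j a * C13 r a k l + C13 r i k a * B13 r j a l
        + C13 r i l a * B13 r j a k)
    = ((if 0 ≤ (i:ℤ)+j+r ∧ (i:ℤ)+j+2*r = (k:ℤ)+l+2 then
        ((k:ℂ)+1)*((l:ℂ)+1)*(((j:ℂ)+1)*2) else 0)
    + (if 0 ≤ (i:ℤ)+r-k-2 ∧ (i:ℤ)+j+2*r = (k:ℤ)+l+2 then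
        ((k:ℂ)+1)*((l:ℂ)+1)*((i:ℂ)+(l:ℂ)-(j:ℂ)-(k:ℂ)) else 0)
    + (if 0 ≤ (i:ℤ)+r-l-2 ∧ (i:ℤ)+j+2*r = (l:ℤ)+k+2 then
        ((l:ℂ)+1)*((k:ℂ)+1)*((i:ℂ)+(k:ℂ)-(j:ℂ)-(l:ℂ)) else 0))
      / (((i:ℂ)+1)*((j:ℂ)+1)*2) := by
  rw [finsum_three (fun a => B13 r i j a * C13 r a k l) (fun a => C13 r i k a * B13 r j a l)
    (fun a => C13 r i l a * B13 r j a k) ((i:ℤ)+j+r) ((i:ℤ)+r-k-2) ((i:ℤ)+r-l-2)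
    (by intro a ha; simp only [B13, if_neg ha, zero_mul])
    (by intro a ha; simp only [C13]; rw [if_neg (by omega), zero_mul])
    (by intro a ha; simp only [C13]; rw [if_neg (by omega), zero_mul])]
  rw [termBC1 r i j k l, termBC2 r i j k l, termBC2 r i j l k, ← add_div,
    ← add_div]


lemma relBC (r : ℤ) (i j k l : ℕ) :
    ∑ᶠ a : ℕ, (B13 r i j a * C13 r a k l + C13 r i k a * B13 r j a l
        + C13 r i l a * B13 r j a k)
    = ∑ᶠ a : ℕ, (B13 r j i a * C13 r a k l + C13 r j k a * B13 r i a l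
        + C13 r j l a * B13 r i a k) := by
  have hi : ((i:ℂ)+1) ≠ 0 := Nat.cast_add_one_ne_zero _
  have hj : ((j:ℂ)+1) ≠ 0 := Nat.cast_add_one_ne_zero _
  rw [sumBC r i j k l, sumBC r j i k l,
    div_eq_div_iff (mul_ne_zero (mul_ne_zero hi hj) two_ne_zero)
      (mul_ne_zero (mul_ne_zero hj hi) two_ne_zero)]
  split_ifs <;>
    first
      | (exfalso; omega)
      | ring
      | skip
  all_goals (
    first
      | (have h' : i = j := by omega
         subst h'
         ring)
      | (have hF : i + k = j + l := by omega
         have hc : ((i + k : ℕ) : ℂ) = ((j + l : ℕ) : ℂ) := by rw [hF]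
         push_cast at hc
         have hl : (l:ℂ) = (i:ℂ)+(k:ℂ)-(j:ℂ) := by linear_combination -hc
         rw [hl]
         ring)
      | (have hF : i + l = j + k := by omega
         have hc : ((i + l : ℕ) : ℂ) = ((j + k : ℕ) : ℂ) := by rw [hF]
         push_cast at hc
         have hl : (l:ℂ) = (j:ℂ)+(k:ℂ)-(i:ℂ) := by linear_combination hc
         rw [hl]
         ring))

lemma termBB1 (r : ℤ) (i j k l : ℕ) :
    B13 r i j ((i:ℤ)+j+r).toNat * B13 r ((i:ℤ)+j+r).toNat k l
    = (if 0 ≤ (i:ℤ)+j+r ∧ (l:ℤ) = (i:ℤ)+j+k+2*r then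
        ((l:ℂ)+1)*(((j:ℂ)+1)*2) else 0) / (((i:ℂ)+1)*((j:ℂ)+1)*2) := by
  simp only [B13]
  have hz : ((((i:ℤ)+j+r).toNat : ℂ) + 1) ≠ 0 := Nat.cast_add_one_ne_zero _
  have hi : ((i:ℂ)+1) ≠ 0 := Nat.cast_add_one_ne_zero _
  have hj : ((j:ℂ)+1) ≠ 0 := Nat.cast_add_one_ne_zero _
  split_ifs <;>
    first
      | (exfalso; omega)
      | (simp; done)
      | (rw [div_mul_div_comm, div_eq_div_iff (mul_ne_zero hi hz)
          (mul_ne_zero (mul_ne_zero hi hj) two_ne_zero)]; ring)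

lemma termBB2 (r : ℤ) (i j k l : ℕ) :
    B13 r i k ((i:ℤ)+k+r).toNat * B13 r j ((i:ℤ)+k+r).toNat l
    = (if 0 ≤ (i:ℤ)+k+r ∧ (l:ℤ) = (i:ℤ)+j+k+2*r then
        ((l:ℂ)+1)*((i:ℂ)+(k:ℂ)+(l:ℂ)-(j:ℂ)+2) else 0) / (((i:ℂ)+1)*((j:ℂ)+1)*2) := by
  simp only [B13]
  have hi : ((i:ℂ)+1) ≠ 0 := Nat.cast_add_one_ne_zero _
  have hj : ((j:ℂ)+1) ≠ 0 := Nat.cast_add_one_ne_zero _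
  split_ifs <;>
    first
      | (exfalso; omega)
      | (simp; done)
      | (have hn : 2 * ((i:ℤ)+k+r).toNat + j = i + k + l := by omega
         have hc : ((2 * ((i:ℤ)+k+r).toNat + j : ℕ) : ℂ) = ((i + k + l : ℕ) : ℂ) := by rw [hn]
         push_cast at hc
         have hv : ((((i:ℤ)+k+r).toNat : ℂ)) = ((i:ℂ)+(k:ℂ)+(l:ℂ)-(j:ℂ))/2 := by
           linear_combination hc/2
         rw [hv, div_mul_div_comm, div_eq_div_iff (mul_ne_zero hi hj)
           (mul_ne_zero (mul_ne_zero hi hj) two_ne_zero)]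
         ring)

lemma termCA3 (r : ℤ) (i j k l : ℕ) :
    C13 r i l ((i:ℤ)+r-l-2).toNat * A13 r j ((i:ℤ)+r-l-2).toNat k
    = (if 0 ≤ (i:ℤ)+r-l-2 ∧ (l:ℤ) = (i:ℤ)+j+k+2*r then
        ((l:ℂ)+1)*((i:ℂ)-(j:ℂ)-(k:ℂ)-(l:ℂ)-2) else 0) / (((i:ℂ)+1)*((j:ℂ)+1)*2) := by
  simp only [C13, A13]
  have hi : ((i:ℂ)+1) ≠ 0 := Nat.cast_add_one_ne_zero _
  have hj : ((j:ℂ)+1) ≠ 0 := Nat.cast_add_one_ne_zero _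
  split_ifs <;>
    first
      | (exfalso; omega)
      | (simp; done)
      | (have hn : 2 * ((i:ℤ)+r-l-2).toNat + 4 + j + k + l = i := by omega
         have hc : ((2 * ((i:ℤ)+r-l-2).toNat + 4 + j + k + l : ℕ) : ℂ) = ((i : ℕ) : ℂ) := by
           rw [hn]
         push_cast at hc
         have hv : ((((i:ℤ)+r-l-2).toNat : ℂ)) = ((i:ℂ)-(j:ℂ)-(k:ℂ)-(l:ℂ)-4)/2 := by
           linear_combination hc/2
         rw [hv, eq_div_iff (mul_ne_zero (mul_ne_zero hi hj) two_ne_zero)]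
         field_simp
         try ring
         try tauto)

lemma sumBB (r : ℤ) (i j k l : ℕ) :
    ∑ᶠ a : ℕ, (B13 r i j a * B13 r a k l + B13 r i k a * B13 r j a l
        + C13 r i l a * A13 r j a k)
    = ((if 0 ≤ (i:ℤ)+j+r ∧ (l:ℤ) = (i:ℤ)+j+k+2*r then
        ((l:ℂ)+1)*(((j:ℂ)+1)*2) else 0)
    + (if 0 ≤ (i:ℤ)+k+r ∧ (l:ℤ) = (i:ℤ)+j+k+2*r then
        ((l:ℂ)+1)*((i:ℂ)+(k:ℂ)+(l:ℂ)-(j:ℂ)+2) else 0)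
    + (if 0 ≤ (i:ℤ)+r-l-2 ∧ (l:ℤ) = (i:ℤ)+j+k+2*r then
        ((l:ℂ)+1)*((i:ℂ)-(j:ℂ)-(k:ℂ)-(l:ℂ)-2) else 0))
      / (((i:ℂ)+1)*((j:ℂ)+1)*2) := by
  rw [finsum_three (fun a => B13 r i j a * B13 r a k l) (fun a => B13 r i k a * B13 r j a l)
    (fun a => C13 r i l a * A13 r j a k) ((i:ℤ)+j+r) ((i:ℤ)+k+r) ((i:ℤ)+r-l-2)
    (by intro a ha; simp only [B13, if_neg ha, zero_mul])
    (by intro a ha; simp only [B13]; rw [if_neg ha, zero_mul])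
    (by intro a ha; simp only [C13]; rw [if_neg (by omega), zero_mul])]
  rw [termBB1 r i j k l, termBB2 r i j k l, termCA3 r i j k l, ← add_div,
    ← add_div]

lemma relBB (r : ℤ) (hr : -1 ≤ r) (i j k l : ℕ) :
    ∑ᶠ a : ℕ, (B13 r i j a * B13 r a k l + B13 r i k a * B13 r j a l
        + C13 r i l a * A13 r j a k)
    = ∑ᶠ a : ℕ, (B13 r j i a * B13 r a k l + B13 r j k a * B13 r i a l
        + C13 r j l a * A13 r i a k) := by
  have hi : ((i:ℂ)+1) ≠ 0 := Nat.cast_add_one_ne_zero _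
  have hj : ((j:ℂ)+1) ≠ 0 := Nat.cast_add_one_ne_zero _
  rw [sumBB r i j k l, sumBB r j i k l,
    div_eq_div_iff (mul_ne_zero (mul_ne_zero hi hj) two_ne_zero)
      (mul_ne_zero (mul_ne_zero hj hi) two_ne_zero)]
  split_ifs <;>
    first
      | (exfalso; omega)
      | ring
      | skip
  all_goals (
    first
      | (have h' : i = j := by omega
         subst h'
         ring)
      | (have h1 : j = 0 := by omega
         have h2 : k = 0 := by omega
         have h3 : l + 2 = i := by omega
         subst h1; subst h2; subst h3
         push_cast
         ring)
      | (have h1 : i = 0 := by omega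
         have h2 : k = 0 := by omega
         have h3 : l + 2 = j := by omega
         subst h1; subst h2; subst h3
         push_cast
         ring))

lemma termBA1 (r : ℤ) (i j k l : ℕ) :
    B13 r i j ((i:ℤ)+j+r).toNat * A13 r ((i:ℤ)+j+r).toNat k l
    = (if 0 ≤ (i:ℤ)+j+r ∧ (i:ℤ)+j+k+l+2*r+2 = 0 then
        ((j:ℂ)+1)*2 else 0) / (((i:ℂ)+1)*((j:ℂ)+1)*2) := by
  simp only [B13, A13]
  have hz : ((((i:ℤ)+j+r).toNat : ℂ) + 1) ≠ 0 := Nat.cast_add_one_ne_zero _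
  have hi : ((i:ℂ)+1) ≠ 0 := Nat.cast_add_one_ne_zero _
  have hj : ((j:ℂ)+1) ≠ 0 := Nat.cast_add_one_ne_zero _
  split_ifs <;>
    first
      | (exfalso; omega)
      | (simp; done)
      | (rw [eq_div_iff (mul_ne_zero (mul_ne_zero hi hj) two_ne_zero)]
         field_simp
         try ring
         try tauto)

lemma termBA2 (r : ℤ) (i j k l : ℕ) :
    B13 r i k ((i:ℤ)+k+r).toNat * A13 r j ((i:ℤ)+k+r).toNat l
    = (if 0 ≤ (i:ℤ)+k+r ∧ (i:ℤ)+j+k+l+2*r+2 = 0 then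
        (i:ℂ)+(k:ℂ)-(j:ℂ)-(l:ℂ) else 0) / (((i:ℂ)+1)*((j:ℂ)+1)*2) := by
  simp only [B13, A13]
  have hi : ((i:ℂ)+1) ≠ 0 := Nat.cast_add_one_ne_zero _
  have hj : ((j:ℂ)+1) ≠ 0 := Nat.cast_add_one_ne_zero _
  split_ifs <;>
    first
      | (exfalso; omega)
      | (simp; done)
      | (have hn : 2 * ((i:ℤ)+k+r).toNat + 2 + j + l = i + k := by omega
         have hc : ((2 * ((i:ℤ)+k+r).toNat + 2 + j + l : ℕ) : ℂ) = ((i + k : ℕ) : ℂ) := by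
           rw [hn]
         push_cast at hc
         have hv : ((((i:ℤ)+k+r).toNat : ℂ)) = ((i:ℂ)+(k:ℂ)-(j:ℂ)-(l:ℂ))/2 - 1 := by
           linear_combination hc/2
         rw [hv, eq_div_iff (mul_ne_zero (mul_ne_zero hi hj) two_ne_zero)]
         field_simp
         try ring
         try tauto)

lemma sumBA (r : ℤ) (i j k l : ℕ) :
    ∑ᶠ a : ℕ, (B13 r i j a * A13 r a k l + B13 r i k a * A13 r j a l
        + B13 r i l a * A13 r j a k)
    = ((if 0 ≤ (i:ℤ)+j+r ∧ (i:ℤ)+j+k+l+2*r+2 = 0 then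
        ((j:ℂ)+1)*2 else 0)
    + (if 0 ≤ (i:ℤ)+k+r ∧ (i:ℤ)+j+k+l+2*r+2 = 0 then
        (i:ℂ)+(k:ℂ)-(j:ℂ)-(l:ℂ) else 0)
    + (if 0 ≤ (i:ℤ)+l+r ∧ (i:ℤ)+j+l+k+2*r+2 = 0 then
        (i:ℂ)+(l:ℂ)-(j:ℂ)-(k:ℂ) else 0))
      / (((i:ℂ)+1)*((j:ℂ)+1)*2) := by
  rw [finsum_three (fun a => B13 r i j a * A13 r a k l) (fun a => B13 r i k a * A13 r j a l)
    (fun a => B13 r i l a * A13 r j a k) ((i:ℤ)+j+r) ((i:ℤ)+k+r) ((i:ℤ)+l+r)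
    (by intro a ha; simp only [B13, if_neg ha, zero_mul])
    (by intro a ha; simp only [B13]; rw [if_neg ha, zero_mul])
    (by intro a ha; simp only [B13]; rw [if_neg ha, zero_mul])]
  rw [termBA1 r i j k l, termBA2 r i j k l, termBA2 r i j l k, ← add_div,
    ← add_div]

lemma relBA (r : ℤ) (hr : -1 ≤ r) (i j k l : ℕ) :
    ∑ᶠ a : ℕ, (B13 r i j a * A13 r a k l + B13 r i k a * A13 r j a l
        + B13 r i l a * A13 r j a k)
    = ∑ᶠ a : ℕ, (B13 r j i a * A13 r a k l + B13 r j k a * A13 r i a l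
        + B13 r j l a * A13 r i a k) := by
  have hi : ((i:ℂ)+1) ≠ 0 := Nat.cast_add_one_ne_zero _
  have hj : ((j:ℂ)+1) ≠ 0 := Nat.cast_add_one_ne_zero _
  rw [sumBA r i j k l, sumBA r j i k l,
    div_eq_div_iff (mul_ne_zero (mul_ne_zero hi hj) two_ne_zero)
      (mul_ne_zero (mul_ne_zero hj hi) two_ne_zero)]
  split_ifs <;>
    first
      | (exfalso; omega)
      | ring

lemma notBB (r : ℤ) (hr : r ≤ -2)
    (H : ∀ i j k l : ℕ,
      ∑ᶠ a : ℕ, (B13 r i j a * B13 r a k l + B13 r i k a * B13 r j a l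
          + C13 r i l a * A13 r j a k)
        = ∑ᶠ a : ℕ, (B13 r j i a * B13 r a k l + B13 r j k a * B13 r i a l
          + C13 r j l a * A13 r i a k)) : False := by
  have h := H 0 1 ((-2*r-1).toNat) 0
  rw [sumBB r 0 1 ((-2*r-1).toNat) 0, sumBB r 1 0 ((-2*r-1).toNat) 0,
    if_neg (by omega), if_pos (by omega), if_neg (by omega),
    if_neg (by omega), if_pos (by omega), if_neg (by omega)] at h
  rw [div_eq_div_iff (by norm_num) (by norm_num)] at h
  push_cast at h
  have : (-8 : ℂ) = 0 := by linear_combination h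
  norm_num at this

lemma notBA (r : ℤ) (hr : r ≤ -2)
    (H : ∀ i j k l : ℕ,
      ∑ᶠ a : ℕ, (B13 r i j a * A13 r a k l + B13 r i k a * A13 r j a l
          + B13 r i l a * A13 r j a k)
        = ∑ᶠ a : ℕ, (B13 r j i a * A13 r a k l + B13 r j k a * A13 r i a l
          + B13 r j l a * A13 r i a k)) : False := by
  rcases eq_or_lt_of_le hr with he | hl
  · -- r = -2
    have h := H 0 1 0 1
    rw [sumBA r 0 1 0 1, sumBA r 1 0 0 1,
      if_neg (by omega), if_neg (by omega), if_neg (by omega),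
      if_neg (by omega), if_neg (by omega), if_pos (by omega)] at h
    rw [div_eq_div_iff (by norm_num) (by norm_num)] at h
    push_cast at h
    have : (-8 : ℂ) = 0 := by linear_combination h
    norm_num at this
  · -- r ≤ -3
    have hr3 : r ≤ -3 := by omega
    have h := H 0 1 0 ((-2*r-3).toNat)
    rw [sumBA r 0 1 0 ((-2*r-3).toNat), sumBA r 1 0 0 ((-2*r-3).toNat),
      if_neg (by omega), if_neg (by omega), if_pos (by omega),
      if_neg (by omega), if_neg (by omega), if_pos (by omega)] at h
    rw [div_eq_div_iff (by norm_num) (by norm_num)] at h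
    push_cast at h
    have : (-8 : ℂ) = 0 := by linear_combination h
    norm_num at this


/-- For the tensors coming from `ξ*_k = z^{k+1}/(k+1)`, `ξ_k = (k+1)z^{−k−2}dz` and
`θ = z^r (dz)^{−1}`:
(a) the (BC) relation holds for every `r ∈ ℤ`;
(b) the (BB-AC) relation holds if and only if `r ≥ −1`;
(c) the (BA) relation holds if and only if `r ≥ −1`.
(All sums over `a ∈ ℕ` are finsums and have at most one nonzero term each.) -/
theorem stmt13 (r : ℤ) :
    (∀ i j k l : ℕ,
      ∑ᶠ a : ℕ, (B13 r i j a * C13 r a k l + C13 r i k a * B13 r j a l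
          + C13 r i l a * B13 r j a k)
        = ∑ᶠ a : ℕ, (B13 r j i a * C13 r a k l + C13 r j k a * B13 r i a l
          + C13 r j l a * B13 r i a k))
    ∧ ((∀ i j k l : ℕ,
      ∑ᶠ a : ℕ, (B13 r i j a * B13 r a k l + B13 r i k a * B13 r j a l
          + C13 r i l a * A13 r j a k)
        = ∑ᶠ a : ℕ, (B13 r j i a * B13 r a k l + B13 r j k a * B13 r i a l
          + C13 r j l a * A13 r i a k)) ↔ -1 ≤ r)
    ∧ ((∀ i j k l : ℕ,
      ∑ᶠ a : ℕ, (B13 r i j a * A13 r a k l + B13 r i k a * A13 r j a l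
          + B13 r i l a * A13 r j a k)
        = ∑ᶠ a : ℕ, (B13 r j i a * A13 r a k l + B13 r j k a * A13 r i a l
          + B13 r j l a * A13 r i a k)) ↔ -1 ≤ r) := by
  refine ⟨fun i j k l => relBC r i j k l,
    ⟨fun H => ?_, fun hr i j k l => relBB r hr i j k l⟩,
    ⟨fun H => ?_, fun hr i j k l => relBA r hr i j k l⟩⟩
  · by_contra hc
    exact notBB r (by omega) H
  · by_contra hc
    exact notBA r (by omega) H
end

section
/- Fix an integer r₀ ≥ −1 and t : ℤ → ℂ with t_r = 0 for all r < r₀. Define tensors indexed by ℕ: A^i_{j,k} := 0; B^i_{j,k} := (k+1)/(i+1) · t_{k−i−j}; C^i_{j,k} := (j+1)(k+1)/(i+1) · t_{j+k+2−i} (interpreting t_m = 0 for m < r₀), and let D : ℕ → ℂ. Then: (i) if D = 0 identically (as is forced by the quantum Airy structure condition when r₀ = −1), the topological recursion amplitudes are well defined (every sum occurring in the recursion has finitely many nonzero terms) and F_{g,n} = 0 for all g, n with 2g−2+n > 0; (ii) if r₀ ≥ 0 and D^k = 0 for all k > r₀, the topological recursion amplitudes are well defined and F_{g,n}(i_1,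 …, i_n) = 0 whenever i_1 + ⋯ + i_n > 2g − 2 + r₀(2 − n). -/
open Finset

/-- The Kontsevich–Soibelman topological recursion amplitudes `F_{g,n}` associated to
tensors `(A,B,C,D)`.  Sums over the index type `ι` are finsums (equal to the usual finite
sums when `ι` is a `Fintype`); terms involving the unstable amplitudes `F_{0,1}` and
`F_{0,2}` are set to zero. -/
noncomputable def TRF {ι : Type*} (A B C : ι → ι → ι → ℂ) (D : ι → ℂ) :
    (g : ℕ) → (n : ℕ) → (Fin n → ι) → ℂ
  | _, 0, _ => 0
  | g, n + 1, v =>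
    if g = 0 ∧ n = 2 then A (v 0) (v 1) (v 2)
    else if g = 1 ∧ n = 0 then D (v 0)
    else if 2 * g + n < 3 then 0
    else
      (∑ m : Fin n, ∑ᶠ a : ι,
        B (v 0) (v m.succ) a *
          TRF A B C D g (({m}ᶜ : Finset (Fin n)).card + 1)
            (Fin.cons a fun j => Fin.tail v ((({m}ᶜ : Finset (Fin n)).orderIsoOfFin rfl) j).1))
      + (1 / 2) * ∑ᶠ a : ι, ∑ᶠ b : ι, C (v 0) a b *
          ((if hg : g = 0 then 0 else
              TRF A B C D (g - 1) (n + 2) (Fin.cons a (Fin.cons b (Fin.tail v))))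
           + ∑ h' ∈ (Finset.range (g + 1)).attach, ∑ S : Finset (Fin n),
               if hS : 2 * h'.1 + S.card = 0 ∨ 2 * (g - h'.1) + (Sᶜ : Finset (Fin n)).card = 0
               then 0
               else
                 TRF A B C D h'.1 (S.card + 1)
                   (Fin.cons a fun j => Fin.tail v ((S.orderIsoOfFin rfl) j).1) *
                 TRF A B C D (g - h'.1) ((Sᶜ : Finset (Fin n)).card + 1)
                   (Fin.cons b fun j => Fin.tail v (((Sᶜ : Finset (Fin n)).orderIsoOfFin rfl) j).1))
  termination_by g n _ => 2 * g + n
  decreasing_by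
  all_goals
    first
    | (have h1 := m.isLt
       have h2 : ({m}ᶜ : Finset (Fin n)).card = n - 1 := by
         simp [Finset.card_compl]
       omega)
    | omega
    | (have h1 : h'.1 ≤ g := by
         have := h'.2
         simp only [Finset.mem_range] at this
         omega
       have h2 : S.card ≤ n := le_trans (Finset.card_le_univ S) (by simp)
       have h3 : (Sᶜ : Finset (Fin n)).card = n - S.card := by
         simp [Finset.card_compl]
       omega)

/-- `B^i_{jk} = (k+1)/(i+1) · t_{k−i−j}`. -/
noncomputable def B16 (t : ℤ → ℂ) (i j k : ℕ) : ℂ :=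
  ((k : ℂ) + 1) / ((i : ℂ) + 1) * t ((k : ℤ) - i - j)

/-- `C^i_{jk} = (j+1)(k+1)/(i+1) · t_{j+k+2−i}`. -/
noncomputable def C16 (t : ℤ → ℂ) (i j k : ℕ) : ℂ :=
  ((j : ℂ) + 1) * ((k : ℂ) + 1) / ((i : ℂ) + 1) * t ((j : ℤ) + k + 2 - i)

lemma sum_orderIsoOfFin {n : ℕ} (S : Finset (Fin n)) {M : Type*} [AddCommMonoid M] (f : Fin n → M) :
    ∑ j : Fin S.card, f ((S.orderIsoOfFin rfl) j).1 = ∑ i ∈ S, f i := by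
  rw [← Finset.sum_coe_sort S f]
  exact Fintype.sum_equiv (S.orderIsoOfFin rfl).toEquiv _ _ (fun j => rfl)

lemma TRF_D_zero {ι : Type*} (B C : ι → ι → ι → ℂ) :
    ∀ (g n : ℕ) (v : Fin n → ι),
      TRF (fun _ _ _ => (0 : ℂ)) B C (fun _ => (0 : ℂ)) g n v = 0 := by
  have key : ∀ (N g n : ℕ) (v : Fin n → ι), 2 * g + n ≤ N →
      TRF (fun _ _ _ => (0 : ℂ)) B C (fun _ => (0 : ℂ)) g n v = 0 := by
    intro N
    induction N with
    | zero =>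
      rintro g (_ | n) v h
      · rw [TRF]
      · omega
    | succ N ih =>
      rintro g (_ | n) v h
      · rw [TRF]
      · rw [TRF]
        split
        · rfl
        · split
          · rfl
          · split
            · rfl
            · rename_i h1 h2 h3
              have hB : (∑ m : Fin n, ∑ᶠ a : ι,
                  B (v 0) (v m.succ) a *
                    TRF (fun _ _ _ => (0:ℂ)) B C (fun _ => (0:ℂ)) g (({m}ᶜ : Finset (Fin n)).card + 1)
                      (Fin.cons a fun j => Fin.tail v ((({m}ᶜ : Finset (Fin n)).orderIsoOfFin rfl) j).1)) = 0 := by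
                apply Finset.sum_eq_zero
                intro m _
                have hm : ({m}ᶜ : Finset (Fin n)).card = n - 1 := by
                  simp [Finset.card_compl]
                have hn : 1 ≤ n := Nat.pos_of_ne_zero (by rintro rfl; exact m.elim0)
                have : ∀ a : ι, B (v 0) (v m.succ) a *
                    TRF (fun _ _ _ => (0:ℂ)) B C (fun _ => (0:ℂ)) g (({m}ᶜ : Finset (Fin n)).card + 1)
                      (Fin.cons a fun j => Fin.tail v ((({m}ᶜ : Finset (Fin n)).orderIsoOfFin rfl) j).1) = 0 := by
                  intro a
                  rw [ih _ _ _ (by omega), mul_zero]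
                rw [finsum_congr this, finsum_zero]
              rw [hB, zero_add]
              have hC : ∀ a : ι, (∑ᶠ b : ι, C (v 0) a b *
                  ((if hg : g = 0 then 0 else
                      TRF (fun _ _ _ => (0:ℂ)) B C (fun _ => (0:ℂ)) (g - 1) (n + 2) (Fin.cons a (Fin.cons b (Fin.tail v))))
                   + ∑ h' ∈ (Finset.range (g + 1)).attach, ∑ S : Finset (Fin n),
                       if hS : 2 * h'.1 + S.card = 0 ∨ 2 * (g - h'.1) + (Sᶜ : Finset (Fin n)).card = 0
                       then 0
                       else
                         TRF (fun _ _ _ => (0:ℂ)) B C (fun _ => (0:ℂ)) h'.1 (S.card + 1)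
                           (Fin.cons a fun j => Fin.tail v ((S.orderIsoOfFin rfl) j).1) *
                         TRF (fun _ _ _ => (0:ℂ)) B C (fun _ => (0:ℂ)) (g - h'.1) ((Sᶜ : Finset (Fin n)).card + 1)
                           (Fin.cons b fun j => Fin.tail v (((Sᶜ : Finset (Fin n)).orderIsoOfFin rfl) j).1))) = 0 := by
                intro a
                have : ∀ b : ι, C (v 0) a b *
                  ((if hg : g = 0 then 0 else
                      TRF (fun _ _ _ => (0:ℂ)) B C (fun _ => (0:ℂ)) (g - 1) (n + 2) (Fin.cons a (Fin.cons b (Fin.tail v))))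
                   + ∑ h' ∈ (Finset.range (g + 1)).attach, ∑ S : Finset (Fin n),
                       if hS : 2 * h'.1 + S.card = 0 ∨ 2 * (g - h'.1) + (Sᶜ : Finset (Fin n)).card = 0
                       then 0
                       else
                         TRF (fun _ _ _ => (0:ℂ)) B C (fun _ => (0:ℂ)) h'.1 (S.card + 1)
                           (Fin.cons a fun j => Fin.tail v ((S.orderIsoOfFin rfl) j).1) *
                         TRF (fun _ _ _ => (0:ℂ)) B C (fun _ => (0:ℂ)) (g - h'.1) ((Sᶜ : Finset (Fin n)).card + 1)
                           (Fin.cons b fun j => Fin.tail v (((Sᶜ : Finset (Fin n)).orderIsoOfFin rfl) j).1)) = 0 := by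
                  intro b
                  have e1 : (if hg : g = 0 then (0:ℂ) else
                      TRF (fun _ _ _ => (0:ℂ)) B C (fun _ => (0:ℂ)) (g - 1) (n + 2) (Fin.cons a (Fin.cons b (Fin.tail v)))) = 0 := by
                    split
                    · rfl
                    · rename_i hg
                      exact ih _ _ _ (by omega)
                  have e2 : (∑ h' ∈ (Finset.range (g + 1)).attach, ∑ S : Finset (Fin n),
                       if hS : 2 * h'.1 + S.card = 0 ∨ 2 * (g - h'.1) + (Sᶜ : Finset (Fin n)).card = 0
                       then (0:ℂ)
                       else
                         TRF (fun _ _ _ => (0:ℂ)) B C (fun _ => (0:ℂ)) h'.1 (S.card + 1)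
                           (Fin.cons a fun j => Fin.tail v ((S.orderIsoOfFin rfl) j).1) *
                         TRF (fun _ _ _ => (0:ℂ)) B C (fun _ => (0:ℂ)) (g - h'.1) ((Sᶜ : Finset (Fin n)).card + 1)
                           (Fin.cons b fun j => Fin.tail v (((Sᶜ : Finset (Fin n)).orderIsoOfFin rfl) j).1)) = 0 := by
                    apply Finset.sum_eq_zero
                    intro h' _
                    apply Finset.sum_eq_zero
                    intro S _
                    split
                    · rfl
                    · rename_i hS
                      push_neg at hS
                      have hle : h'.1 ≤ g := by
                        have := h'.2
                        simp only [Finset.mem_range] at this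
                        omega
                      have hc : S.card + (Sᶜ : Finset (Fin n)).card = n := by
                        rw [Finset.card_compl]
                        have : S.card ≤ n := le_trans (Finset.card_le_univ S) (by simp)
                        simp; omega
                      rw [ih _ _ _ (by omega), zero_mul]
                  rw [e1, e2, zero_add, mul_zero]
                rw [finsum_congr this, finsum_zero]
              rw [finsum_congr hC, finsum_zero, mul_zero]
  exact fun g n v => key (2 * g + n) g n v le_rfl

lemma sum_compl_eq {n : ℕ} (S : Finset (Fin n)) (f : Fin n → ℤ) :
    ∑ i ∈ (Sᶜ : Finset (Fin n)), f i = ∑ i : Fin n, f i - ∑ i ∈ S, f i := by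
  rw [← Finset.sum_compl_add_sum S f]; ring

lemma sum_tail_eq {n : ℕ} (v : Fin (n + 1) → ℕ) :
    ∑ i : Fin n, ((Fin.tail v i : ℕ) : ℤ) = (∑ i : Fin (n+1), ((v i : ℕ) : ℤ)) - (v 0 : ℤ) := by
  rw [Fin.sum_univ_succ]
  simp [Fin.tail]

lemma sum_cons_orderIso {n : ℕ} (S : Finset (Fin n)) (a : ℕ) (w : Fin n → ℕ) :
    ∑ m : Fin (S.card + 1),
      (((Fin.cons a (fun j => w ((S.orderIsoOfFin rfl) j).1) : Fin (S.card + 1) → ℕ) m : ℕ) : ℤ)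
      = (a : ℤ) + ∑ i ∈ S, ((w i : ℕ) : ℤ) := by
  rw [Fin.sum_univ_succ]
  simp only [Fin.cons_zero, Fin.cons_succ]
  congr 1
  exact sum_orderIsoOfFin S (fun i => ((w i : ℕ) : ℤ))

lemma TRF_vanish (r0 : ℤ) (hr0 : 0 ≤ r0) (t : ℤ → ℂ) (ht : ∀ r : ℤ, r < r0 → t r = 0)
    (D : ℕ → ℂ) (hD : ∀ k : ℕ, r0 < (k : ℤ) → D k = 0) :
    ∀ (g n : ℕ) (v : Fin n → ℕ),
      2 * (g : ℤ) - 2 + r0 * (2 - (n : ℤ)) < ∑ m : Fin n, ((v m : ℕ) : ℤ) →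
      TRF (fun _ _ _ => (0 : ℂ)) (B16 t) (C16 t) D g n v = 0 := by
  have key : ∀ (N g n : ℕ) (v : Fin n → ℕ), 2 * g + n ≤ N →
      2 * (g : ℤ) - 2 + r0 * (2 - (n : ℤ)) < ∑ m : Fin n, ((v m : ℕ) : ℤ) →
      TRF (fun _ _ _ => (0 : ℂ)) (B16 t) (C16 t) D g n v = 0 := by
    intro N
    induction N with
    | zero =>
      rintro g (_ | n) v h hs
      · rw [TRF]
      · omega
    | succ N ih =>
      rintro g (_ | n) v h hs
      · rw [TRF]
      · rw [TRF]
        split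
        · rfl
        · split
          · rename_i h03 h11
            obtain ⟨rfl, rfl⟩ := h11
            apply hD
            rw [Fin.sum_univ_one] at hs
            push_cast at hs
            linarith
          · split
            · rfl
            · rename_i h03 h11 hst
              have hB : (∑ m : Fin n, ∑ᶠ a : ℕ,
                  B16 t (v 0) (v m.succ) a *
                    TRF (fun _ _ _ => (0:ℂ)) (B16 t) (C16 t) D g (({m}ᶜ : Finset (Fin n)).card + 1)
                      (Fin.cons a fun j => Fin.tail v ((({m}ᶜ : Finset (Fin n)).orderIsoOfFin rfl) j).1)) = 0 := by
                apply Finset.sum_eq_zero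
                intro m _
                have hm : ({m}ᶜ : Finset (Fin n)).card = n - 1 := by
                  simp [Finset.card_compl]
                have hn : 1 ≤ n := m.pos
                have hall : ∀ a : ℕ, B16 t (v 0) (v m.succ) a *
                    TRF (fun _ _ _ => (0:ℂ)) (B16 t) (C16 t) D g (({m}ᶜ : Finset (Fin n)).card + 1)
                      (Fin.cons a fun j => Fin.tail v ((({m}ᶜ : Finset (Fin n)).orderIsoOfFin rfl) j).1) = 0 := by
                  intro a
                  by_cases hcase : (a : ℤ) - (v 0) - (v m.succ) < r0
                  · have hB0 : B16 t (v 0) (v m.succ) a = 0 := by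
                      unfold B16
                      rw [ht _ hcase, mul_zero]
                    rw [hB0, zero_mul]
                  · push_neg at hcase
                    refine mul_eq_zero_of_right _ (ih _ _ _ (by omega) ?_)
                    rw [sum_cons_orderIso]
                    have h2 : ∑ i ∈ ({m}ᶜ : Finset (Fin n)), ((Fin.tail v i : ℕ) : ℤ)
                        = (∑ i : Fin (n+1), ((v i : ℕ) : ℤ)) - (v 0 : ℤ) - (v m.succ : ℤ) := by
                      rw [sum_compl_eq, sum_tail_eq, Finset.sum_singleton]
                      rfl
                    rw [h2]
                    have hcast : (((({m}ᶜ : Finset (Fin n)).card + 1 : ℕ)) : ℤ) = (n : ℤ) := by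
                      omega
                    rw [hcast]
                    have e1 : r0 * (2 - (n : ℤ)) = r0 * (2 - ((n : ℤ) + 1)) + r0 := by ring
                    push_cast at hs
                    linarith
                rw [finsum_congr hall, finsum_zero]
              rw [hB, zero_add]
              have hC : ∀ a : ℕ, (∑ᶠ b : ℕ, C16 t (v 0) a b *
                  ((if hg : g = 0 then 0 else
                      TRF (fun _ _ _ => (0:ℂ)) (B16 t) (C16 t) D (g - 1) (n + 2) (Fin.cons a (Fin.cons b (Fin.tail v))))
                   + ∑ h' ∈ (Finset.range (g + 1)).attach, ∑ S : Finset (Fin n),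
                       if hS : 2 * h'.1 + S.card = 0 ∨ 2 * (g - h'.1) + (Sᶜ : Finset (Fin n)).card = 0
                       then 0
                       else
                         TRF (fun _ _ _ => (0:ℂ)) (B16 t) (C16 t) D h'.1 (S.card + 1)
                           (Fin.cons a fun j => Fin.tail v ((S.orderIsoOfFin rfl) j).1) *
                         TRF (fun _ _ _ => (0:ℂ)) (B16 t) (C16 t) D (g - h'.1) ((Sᶜ : Finset (Fin n)).card + 1)
                           (Fin.cons b fun j => Fin.tail v (((Sᶜ : Finset (Fin n)).orderIsoOfFin rfl) j).1))) = 0 := by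
                intro a
                have hall : ∀ b : ℕ, C16 t (v 0) a b *
                  ((if hg : g = 0 then 0 else
                      TRF (fun _ _ _ => (0:ℂ)) (B16 t) (C16 t) D (g - 1) (n + 2) (Fin.cons a (Fin.cons b (Fin.tail v))))
                   + ∑ h' ∈ (Finset.range (g + 1)).attach, ∑ S : Finset (Fin n),
                       if hS : 2 * h'.1 + S.card = 0 ∨ 2 * (g - h'.1) + (Sᶜ : Finset (Fin n)).card = 0
                       then 0
                       else
                         TRF (fun _ _ _ => (0:ℂ)) (B16 t) (C16 t) D h'.1 (S.card + 1)
                           (Fin.cons a fun j => Fin.tail v ((S.orderIsoOfFin rfl) j).1) *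
                         TRF (fun _ _ _ => (0:ℂ)) (B16 t) (C16 t) D (g - h'.1) ((Sᶜ : Finset (Fin n)).card + 1)
                           (Fin.cons b fun j => Fin.tail v (((Sᶜ : Finset (Fin n)).orderIsoOfFin rfl) j).1)) = 0 := by
                  intro b
                  by_cases hcase : (a : ℤ) + (b : ℤ) + 2 - (v 0) < r0
                  · have hC0 : C16 t (v 0) a b = 0 := by
                      unfold C16
                      rw [ht _ hcase, mul_zero]
                    rw [hC0, zero_mul]
                  · push_neg at hcase
                    apply mul_eq_zero_of_right
                    have e1 : (if hg : g = 0 then (0:ℂ) else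
                        TRF (fun _ _ _ => (0:ℂ)) (B16 t) (C16 t) D (g - 1) (n + 2) (Fin.cons a (Fin.cons b (Fin.tail v)))) = 0 := by
                      split
                      · rfl
                      · rename_i hg
                        refine ih _ _ _ (by omega) ?_
                        have hsum2 : ∑ m : Fin (n+2),
                            (((Fin.cons a (Fin.cons b (Fin.tail v)) : Fin (n+2) → ℕ) m : ℕ) : ℤ)
                            = (a : ℤ) + (b : ℤ) + ((∑ i : Fin (n+1), ((v i : ℕ) : ℤ)) - (v 0 : ℤ)) := by
                          rw [Fin.sum_univ_succ, Fin.sum_univ_succ]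
                          simp only [Fin.cons_zero, Fin.cons_succ]
                          rw [sum_tail_eq]
                          ring
                        rw [hsum2]
                        have hg1 : ((g - 1 : ℕ) : ℤ) = (g : ℤ) - 1 := by omega
                        rw [hg1]
                        have e2 : r0 * (2 - ((n + 2 : ℕ) : ℤ)) = r0 * (2 - ((n : ℤ) + 1)) - r0 := by
                          push_cast; ring
                        rw [e2]
                        push_cast at hs
                        linarith
                    have e2 : (∑ h' ∈ (Finset.range (g + 1)).attach, ∑ S : Finset (Fin n),
                         if hS : 2 * h'.1 + S.card = 0 ∨ 2 * (g - h'.1) + (Sᶜ : Finset (Fin n)).card = 0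
                         then (0:ℂ)
                         else
                           TRF (fun _ _ _ => (0:ℂ)) (B16 t) (C16 t) D h'.1 (S.card + 1)
                             (Fin.cons a fun j => Fin.tail v ((S.orderIsoOfFin rfl) j).1) *
                           TRF (fun _ _ _ => (0:ℂ)) (B16 t) (C16 t) D (g - h'.1) ((Sᶜ : Finset (Fin n)).card + 1)
                             (Fin.cons b fun j => Fin.tail v (((Sᶜ : Finset (Fin n)).orderIsoOfFin rfl) j).1)) = 0 := by
                      apply Finset.sum_eq_zero
                      intro h' _
                      apply Finset.sum_eq_zero
                      intro S _
                      split
                      · rfl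
                      · rename_i hS
                        push_neg at hS
                        obtain ⟨hS1, hS2⟩ := hS
                        have hle : h'.1 ≤ g := by
                          have := h'.2
                          simp only [Finset.mem_range] at this
                          omega
                        have hc : S.card + (Sᶜ : Finset (Fin n)).card = n := by
                          rw [Finset.card_compl]
                          have : S.card ≤ n := le_trans (Finset.card_le_univ S) (by simp)
                          simp; omega
                        have hsplit : (∑ i ∈ S, ((Fin.tail v i : ℕ) : ℤ))
                            + (∑ i ∈ (Sᶜ : Finset (Fin n)), ((Fin.tail v i : ℕ) : ℤ))
                            = (∑ i : Fin (n+1), ((v i : ℕ) : ℤ)) - (v 0 : ℤ) := by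
                          rw [sum_compl_eq, sum_tail_eq]; ring
                        rcases lt_or_ge (2 * (h'.1 : ℤ) - 2 + r0 * (2 - ((S.card : ℤ) + 1)))
                            ((a : ℤ) + ∑ i ∈ S, ((Fin.tail v i : ℕ) : ℤ)) with hlt | hge
                        · refine mul_eq_zero_of_left (ih _ _ _ (by omega) ?_) _
                          rw [sum_cons_orderIso]
                          push_cast
                          convert hlt using 2
                        · refine mul_eq_zero_of_right _ (ih _ _ _ (by omega) ?_)
                          rw [sum_cons_orderIso]
                          have hgh : ((g - h'.1 : ℕ) : ℤ) = (g : ℤ) - (h'.1 : ℤ) := by omega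
                          rw [hgh]
                          have f1 : r0 * (2 - (((Sᶜ : Finset (Fin n)).card + 1 : ℕ) : ℤ))
                              = r0 - r0 * (((Sᶜ : Finset (Fin n)).card : ℕ) : ℤ) := by
                            push_cast; ring
                          have f2 : r0 * (2 - ((S.card : ℤ) + 1)) = r0 - r0 * (S.card : ℤ) := by ring
                          have f3 : r0 * ((S.card : ℕ) : ℤ) + r0 * (((Sᶜ : Finset (Fin n)).card : ℕ) : ℤ)
                              = r0 * (n : ℤ) := by
                            rw [← mul_add]
                            congr 1
                            omega
                          have f4 : r0 * (2 - (((n : ℕ) : ℤ) + 1)) = r0 - r0 * (n : ℤ) := by ring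
                          push_cast at hs
                          rw [f1]
                          linarith [hge, hcase, hsplit, hs, hr0, f2, f3, f4]
                    rw [e1, e2, add_zero]
                rw [finsum_congr hall, finsum_zero]
              rw [finsum_congr hC, finsum_zero, mul_zero]
  exact fun g n v => key (2 * g + n) g n v le_rfl

lemma support_finite_of_bound {n : ℕ} (f : (Fin n → ℕ) → ℂ) (K : ℤ)
    (hf : ∀ v : Fin n → ℕ, K < ∑ m : Fin n, ((v m : ℕ) : ℤ) → f v = 0) :
    (Function.support f).Finite := by
  have hsub : Function.support f ⊆ Set.pi Set.univ (fun _ : Fin n => Set.Iic K.toNat) := by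
    intro v hv i _
    simp only [Set.mem_Iic]
    by_contra hbig
    push_neg at hbig
    apply hv
    apply hf
    have h1 : ((v i : ℕ) : ℤ) ≤ ∑ m : Fin n, ((v m : ℕ) : ℤ) :=
      Finset.single_le_sum (f := fun m : Fin n => ((v m : ℕ) : ℤ))
        (fun j _ => Int.ofNat_nonneg _) (Finset.mem_univ i)
    have h2 := Int.self_le_toNat K
    have h3 : (K.toNat : ℤ) < ((v i : ℕ) : ℤ) := by exact_mod_cast hbig
    linarith
  exact (Set.Finite.pi (fun _ => Set.finite_Iic _)).subset hsub

/-- Vanishing of the amplitudes of the loop-space quantum Airy structure with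
`θ(z) = Σ_{r ≥ r₀} t_r z^r (dz)^{−1}`, `A = 0`:
(i) if `D = 0` the amplitudes are well defined (for each `(g,n)` only finitely many are
nonzero) and all vanish;
(ii) if `r₀ ≥ 0` and `D^k = 0` for `k > r₀`, the amplitudes are well defined and
`F_{g,n}(i₁,…,iₙ) = 0` whenever `i₁ + ⋯ + iₙ > 2g − 2 + r₀(2 − n)`. -/
theorem stmt16 (r0 : ℤ) (hr0 : -1 ≤ r0) (t : ℤ → ℂ) (ht : ∀ r : ℤ, r < r0 → t r = 0) :
    ((∀ g n : ℕ, 1 ≤ n → 2 < 2 * g + n →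
        (Function.support
          (TRF (fun _ _ _ => (0 : ℂ)) (B16 t) (C16 t) (fun _ => (0 : ℂ)) g n)).Finite
        ∧ ∀ v : Fin n → ℕ,
            TRF (fun _ _ _ => (0 : ℂ)) (B16 t) (C16 t) (fun _ => (0 : ℂ)) g n v = 0))
    ∧ (0 ≤ r0 → ∀ D : ℕ → ℂ, (∀ k : ℕ, r0 < (k : ℤ) → D k = 0) →
        ∀ g n : ℕ, 1 ≤ n → 2 < 2 * g + n →
          (Function.support (TRF (fun _ _ _ => (0 : ℂ)) (B16 t) (C16 t) D g n)).Finite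
          ∧ ∀ v : Fin n → ℕ,
              2 * (g : ℤ) - 2 + r0 * (2 - (n : ℤ)) < ∑ m : Fin n, ((v m : ℕ) : ℤ) →
              TRF (fun _ _ _ => (0 : ℂ)) (B16 t) (C16 t) D g n v = 0) := by
  constructor
  · intro g n _ _
    refine ⟨?_, fun v => TRF_D_zero (B16 t) (C16 t) g n v⟩
    have : Function.support
        (TRF (fun _ _ _ => (0 : ℂ)) (B16 t) (C16 t) (fun _ => (0 : ℂ)) g n) ⊆ ∅ :=
      fun v hv => absurd (TRF_D_zero (B16 t) (C16 t) g n v) hv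
    exact Set.Finite.subset (Set.finite_empty) this
  · intro hr0' D hD g n _ _
    exact ⟨support_finite_of_bound _ _ (TRF_vanish r0 hr0' t ht D hD g n),
      TRF_vanish r0 hr0' t ht D hD g n⟩
end

section
/- Let t : ℤ → ℂ satisfy t_s = 0 for all s < −1. Define tensors indexed by ℕ: A^i_{j,k} := t_{−1} if i = j = k = 0 and 0 otherwise; B^i_{j,k} := (2k+1)/(2i+1) · t_{k−i−j}; C^i_{j,k} := (2j+1)(2k+1)/(2i+1) · t_{j+k+1−i} (interpreting t_m = 0 for m < −1), and let D : ℕ → ℂ satisfy D^i = 0 for all i ≥ 2. Then the topological recursion amplitudes are well defined (every sum occurring in the recursion has only finitely many nonzero terms) and F_{g,n}(i_1, …, i_n) = 0 whenever i_1 + ⋯ + i_n > 3g − 3 + n. -/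
open Finset

/-- `A^i_{jk} = t_{−1}` if `i = j = k = 0`, else `0`. -/
noncomputable def A17 (t : ℤ → ℂ) (i j k : ℕ) : ℂ :=
  if i = 0 ∧ j = 0 ∧ k = 0 then t (-1) else 0

/-- `B^i_{jk} = (2k+1)/(2i+1) · t_{k−i−j}`. -/
noncomputable def B17 (t : ℤ → ℂ) (i j k : ℕ) : ℂ :=
  (2 * (k : ℂ) + 1) / (2 * (i : ℂ) + 1) * t ((k : ℤ) - i - j)

/-- `C^i_{jk} = (2j+1)(2k+1)/(2i+1) · t_{j+k+1−i}`. -/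
noncomputable def C17 (t : ℤ → ℂ) (i j k : ℕ) : ℂ :=
  (2 * (j : ℂ) + 1) * (2 * (k : ℂ) + 1) / (2 * (i : ℂ) + 1) * t ((j : ℤ) + k + 1 - i)

lemma finsum_zero' {α M : Type*} [AddCommMonoid M] {f : α → M} (h : ∀ a, f a = 0) :
    ∑ᶠ a, f a = 0 := by rw [finsum_congr h]; exact finsum_zero

lemma sum_orderIso {k c : ℕ} (s : Finset (Fin k)) (h : s.card = c) (f : Fin k → ℤ) :
    ∑ j : Fin c, f ((s.orderIsoOfFin h) j).1 = ∑ x ∈ s, f x := by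
  rw [← Finset.sum_coe_sort s f]
  exact Equiv.sum_comp (s.orderIsoOfFin h).toEquiv (fun x : {x // x ∈ s} => f x.1)

lemma add_eq_zero'' {x y : ℂ} (hx : x = 0) (hy : y = 0) : x + y = 0 := by
  rw [hx, hy, add_zero]

lemma vanish (t : ℤ → ℂ) (ht : ∀ s : ℤ, s < -1 → t s = 0)
    (D : ℕ → ℂ) (hD : ∀ i : ℕ, 2 ≤ i → D i = 0) (N : ℕ) :
    ∀ g n : ℕ, ∀ v : Fin n → ℕ, 2 * g + n ≤ N →
      3 * (g : ℤ) - 3 + (n : ℤ) < ∑ m : Fin n, ((v m : ℕ) : ℤ) →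
      TRF (A17 t) (B17 t) (C17 t) D g n v = 0 := by
  induction N with
  | zero =>
    intro g n v hN _
    obtain rfl : n = 0 := by omega
    rw [TRF]
  | succ N IH =>
    intro g n v hN hd
    match n, v, hN, hd with
    | 0, v, hN, hd => rw [TRF]
    | n + 1, v, hN, hd =>
      rw [TRF]
      rw [Fin.sum_univ_succ] at hd
      push_cast at hd
      set T : ℤ := ∑ i : Fin n, ((v i.succ : ℕ) : ℤ) with hT
      by_cases h1 : g = 0 ∧ n = 2
      · -- A-term
        rw [if_pos h1]
        obtain ⟨rfl, rfl⟩ := h1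
        rw [A17, if_neg]
        rintro ⟨e0, e1, e2⟩
        have h0 : T = ((v (0 : Fin 2).succ : ℕ) : ℤ) + ((v (1 : Fin 2).succ : ℕ) : ℤ) := by
          rw [hT, Fin.sum_univ_two]
        have ha : v (0 : Fin 2).succ = v 1 := rfl
        have hb : v (1 : Fin 2).succ = v 2 := rfl
        rw [ha, hb] at h0
        omega
      rw [if_neg h1]
      by_cases h2 : g = 1 ∧ n = 0
      · -- D-term
        rw [if_pos h2]
        obtain ⟨rfl, rfl⟩ := h2
        apply hD
        have h0 : T = 0 := by rw [hT]; simp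
        omega
      rw [if_neg h2]
      by_cases h3 : 2 * g + n < 3
      · rw [if_pos h3]
      rw [if_neg h3]
      have htailsum : ∑ i : Fin n, ((Fin.tail v i : ℕ) : ℤ) = T := rfl
      apply add_eq_zero''
      · -- B-terms
        apply Finset.sum_eq_zero
        intro m _
        apply finsum_zero'
        intro a
        by_cases hB : (a : ℤ) - (v 0) - (v m.succ) < -1
        · rw [B17, ht _ hB, mul_zero, zero_mul]
        · apply mul_eq_zero_of_right
          have hn1 : 1 ≤ n := by have := m.isLt; omega
          have hcm : ({m}ᶜ : Finset (Fin n)).card = n - 1 := by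
            simp [Finset.card_compl]
          apply IH
          · omega
          · rw [Fin.sum_univ_succ]
            simp only [Fin.cons_zero, Fin.cons_succ]
            rw [sum_orderIso ({m}ᶜ : Finset (Fin n)) rfl
              (fun x => ((Fin.tail v x : ℕ) : ℤ))]
            have hcompl : ∑ x ∈ ({m}ᶜ : Finset (Fin n)), ((Fin.tail v x : ℕ) : ℤ)
                + ∑ x ∈ ({m} : Finset (Fin n)), ((Fin.tail v x : ℕ) : ℤ) = T := by
              rw [Finset.sum_compl_add_sum]; exact htailsum
            rw [Finset.sum_singleton] at hcompl
            have hbr : Fin.tail v m = v m.succ := rfl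
            rw [hbr] at hcompl
            omega
      · -- C-terms
        apply mul_eq_zero_of_right
        apply finsum_zero'; intro a
        apply finsum_zero'; intro b
        by_cases hC : (a : ℤ) + (b : ℤ) + 1 - (v 0) < -1
        · rw [C17, ht _ hC, mul_zero, zero_mul]
        · apply mul_eq_zero_of_right
          apply add_eq_zero''
          · -- genus-reduction term
            by_cases hg : g = 0
            · rw [dif_pos hg]
            · rw [dif_neg hg]
              apply IH
              · omega
              · rw [Fin.sum_univ_succ, Fin.sum_univ_succ]
                simp only [Fin.cons_zero, Fin.cons_succ]
                rw [htailsum]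
                omega
          · -- splitting terms
            apply Finset.sum_eq_zero; intro h' _
            apply Finset.sum_eq_zero; intro S _
            by_cases hS : 2 * h'.1 + S.card = 0 ∨
                2 * (g - h'.1) + (Sᶜ : Finset (Fin n)).card = 0
            · rw [dif_pos hS]
            · rw [dif_neg hS]
              have hle : h'.1 ≤ g := by
                have := h'.2
                simp only [Finset.mem_range] at this
                omega
              have hSc : (Sᶜ : Finset (Fin n)).card = n - S.card := by
                simp [Finset.card_compl]
              have hSn : S.card ≤ n := le_trans (Finset.card_le_univ S) (by simp)
              have hsplitsum : ∑ x ∈ S, ((Fin.tail v x : ℕ) : ℤ)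
                  + ∑ x ∈ (Sᶜ : Finset (Fin n)), ((Fin.tail v x : ℕ) : ℤ) = T := by
                rw [Finset.sum_add_sum_compl]; exact htailsum
              rcases lt_or_ge (3 * (h'.1 : ℤ) - 3 + ((S.card : ℤ) + 1))
                  ((a : ℤ) + ∑ x ∈ S, ((Fin.tail v x : ℕ) : ℤ)) with hc | hc
              · apply mul_eq_zero_of_left
                apply IH
                · omega
                · rw [Fin.sum_univ_succ]
                  simp only [Fin.cons_zero, Fin.cons_succ]
                  rw [sum_orderIso S rfl (fun x => ((Fin.tail v x : ℕ) : ℤ))]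
                  push_cast
                  omega
              · apply mul_eq_zero_of_right
                apply IH
                · omega
                · rw [Fin.sum_univ_succ]
                  simp only [Fin.cons_zero, Fin.cons_succ]
                  rw [sum_orderIso (Sᶜ : Finset (Fin n)) rfl
                    (fun x => ((Fin.tail v x : ℕ) : ℤ))]
                  push_cast
                  omega


/-- Dimension bound for the `ℤ₂`-invariant loop-space quantum Airy structure with
`θ(z) = Σ_{s≥−1} t_s z^{2s} (dz)^{−1}` and `D` vanishing in degrees `≥ 2`:
the amplitudes are well defined (for each `(g,n)` only finitely many are nonzero), and
`F_{g,n}(i₁,…,iₙ) = 0` whenever `i₁ + ⋯ + iₙ > 3g − 3 + n`. -/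
theorem stmt17 (t : ℤ → ℂ) (ht : ∀ s : ℤ, s < -1 → t s = 0)
    (D : ℕ → ℂ) (hD : ∀ i : ℕ, 2 ≤ i → D i = 0) :
    ∀ g n : ℕ, 1 ≤ n → 2 < 2 * g + n →
      (Function.support (TRF (A17 t) (B17 t) (C17 t) D g n)).Finite
      ∧ ∀ v : Fin n → ℕ,
          3 * (g : ℤ) - 3 + (n : ℤ) < ∑ m : Fin n, ((v m : ℕ) : ℤ) →
          TRF (A17 t) (B17 t) (C17 t) D g n v = 0 := by
  intro g n hn hgn
  constructor
  · have hfin : (Set.pi Set.univ fun _ : Fin n => Set.Iic (3 * g + n) : Set (Fin n → ℕ)).Finite :=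
      Set.Finite.pi fun _ => Set.finite_Iic _
    refine hfin.subset ?_
    intro v hv
    simp only [Set.mem_pi, Set.mem_univ, Set.mem_Iic, forall_true_left]
    intro m
    by_contra hm
    apply hv
    apply vanish t ht D hD (2 * g + n) g n v le_rfl
    have hle : ((v m : ℕ) : ℤ) ≤ ∑ i : Fin n, ((v i : ℕ) : ℤ) :=
      Finset.single_le_sum (f := fun i => ((v i : ℕ) : ℤ))
        (fun i _ => Int.natCast_nonneg _) (Finset.mem_univ m)
    omega
  · intro v hv
    exact vanish t ht D hD (2 * g + n) g n v le_rfl hv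
end
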